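/- arXiv:2510.22026 — 6 statements merged into one kernel-verified Lean document; each statement's English description precedes it below -/
import Mathlib

section
/- Let n ≥ 1, β > 0 with e^β ≥ n, and let θ₁, …, θₙ ∈ S^{d−1} be any unit vectors. Then for every j ∈ {1,…,n}, the alignment of token j with its attention vector satisfies ⟨θⱼ, Aⱼ(Θ)⟩ ≥ 1/(n e^β); in particular it is strictly positive. -/
open Filter Real
open scoped RealInnerProductSpace BigOperators

/-- Attention vector `A_j(Θ)` with `Q = K = V = I_d` and inverse temperature `β`. -/
noncomputable def attn {d n : ℕ} (β : ℝ) (θ : Fin n → EuclideanSpace ℝ (Fin d)) (j : Fin n) :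
    EuclideanSpace ℝ (Fin d) :=
  (∑ l, Real.exp (β * ⟪θ j, θ l⟫))⁻¹ • ∑ k, Real.exp (β * ⟪θ j, θ k⟫) • θ k

lemma term_lb (β c : ℝ) (hc : |c| ≤ 1) (hβ : 0 < β) : -1 ≤ Real.exp (β * c) * c := by
  rcases le_or_gt 0 c with h | h
  · nlinarith [Real.exp_pos (β * c)]
  · have h1 : Real.exp (β * c) ≤ 1 := by
      rw [Real.exp_le_one_iff]
      nlinarith
    have h2 : -1 ≤ c := neg_le_of_abs_le hc
    nlinarith [Real.exp_pos (β * c)]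

/-- if `e^β ≥ n` then every token is aligned with its attention vector:
`⟨θⱼ, Aⱼ(Θ)⟩ ≥ 1/(n e^β) > 0`. -/
theorem alignment_lower_bound {d n : ℕ} (hn : 1 ≤ n) (β : ℝ) (hβ : 0 < β)
    (hnβ : (n : ℝ) ≤ Real.exp β)
    (θ : Fin n → EuclideanSpace ℝ (Fin d)) (hθ : ∀ j, ‖θ j‖ = 1) (j : Fin n) :
    1 / (n * Real.exp β) ≤ ⟪θ j, attn β θ j⟫ ∧ 0 < ⟪θ j, attn β θ j⟫ := by
  set c : Fin n → ℝ := fun k => ⟪θ j, θ k⟫ with hc_def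
  have hcj : c j = 1 := by
    simp only [hc_def, real_inner_self_eq_norm_sq, hθ j, one_pow]
  have hc : ∀ k, |c k| ≤ 1 := by
    intro k
    calc |c k| ≤ ‖θ j‖ * ‖θ k‖ := abs_real_inner_le_norm _ _
    _ = 1 := by rw [hθ j, hθ k, one_mul]
  have hinner : ⟪θ j, attn β θ j⟫
      = (∑ l, Real.exp (β * c l))⁻¹ * ∑ k, Real.exp (β * c k) * c k := by
    simp only [attn, inner_smul_right, inner_sum, hc_def]
  have hZpos : 0 < ∑ l, Real.exp (β * c l) :=
    Finset.sum_pos (fun l _ => Real.exp_pos _) ⟨j, Finset.mem_univ j⟩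
  have hZle : ∑ l, Real.exp (β * c l) ≤ n * Real.exp β := by
    calc ∑ l, Real.exp (β * c l) ≤ ∑ _l : Fin n, Real.exp β := by
          refine Finset.sum_le_sum fun l _ => Real.exp_le_exp.2 ?_
          have := (abs_le.1 (hc l)).2
          nlinarith
      _ = n * Real.exp β := by
          simp [Finset.sum_const, Finset.card_univ, nsmul_eq_mul]
  have hcard : (((Finset.univ : Finset (Fin n)).erase j).card : ℝ) = (n : ℝ) - 1 := by
    rw [Finset.card_erase_of_mem (Finset.mem_univ j), Finset.card_univ, Fintype.card_fin]
    push_cast [Nat.cast_sub hn]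
    ring
  have hsplit : ∑ k, Real.exp (β * c k) * c k
      = Real.exp (β * c j) * c j
        + ∑ k ∈ (Finset.univ : Finset (Fin n)).erase j, Real.exp (β * c k) * c k :=
    (Finset.add_sum_erase _ _ (Finset.mem_univ j)).symm
  have hrest : -((n : ℝ) - 1) ≤
      ∑ k ∈ (Finset.univ : Finset (Fin n)).erase j, Real.exp (β * c k) * c k := by
    calc -((n : ℝ) - 1) = (((Finset.univ : Finset (Fin n)).erase j).card : ℝ) * (-1) := by
          rw [hcard]; ring
      _ = ∑ _k ∈ (Finset.univ : Finset (Fin n)).erase j, (-1 : ℝ) := by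
          rw [Finset.sum_const, nsmul_eq_mul]
      _ ≤ _ := Finset.sum_le_sum (fun k _ => term_lb β (c k) (hc k) hβ)
  have hN : 1 ≤ ∑ k, Real.exp (β * c k) * c k := by
    rw [hsplit, hcj]
    have : Real.exp (β * 1) * 1 = Real.exp β := by ring_nf
    rw [this]
    linarith
  have hnpos : (0 : ℝ) < n := by exact_mod_cast hn
  have hdenpos : (0 : ℝ) < n * Real.exp β := by positivity
  have h1 : 1 / (n * Real.exp β) ≤ (∑ l, Real.exp (β * c l))⁻¹ := by
    rw [one_div]
    exact inv_anti₀ hZpos hZle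
  have h2 : (∑ l, Real.exp (β * c l))⁻¹
      ≤ (∑ l, Real.exp (β * c l))⁻¹ * ∑ k, Real.exp (β * c k) * c k := by
    nlinarith [inv_pos.2 hZpos]
  constructor
  · rw [hinner]; linarith
  · rw [hinner]
    have : 0 < 1 / (n * Real.exp β) := by positivity
    linarith
end

section
/- Let 2 ≤ n ≤ d and β > 0. Suppose Θ : [0,∞) → (S^{d−1})ⁿ is a C¹ curve satisfying the Post-LN dynamics θ̇ⱼ(t) = P_{θⱼ(t)} Aⱼ(Θ(t)) for every j and t, initialized at a symmetric orthogonal configuration, i.e. ⟨θⱼ(0), θₖ(0)⟩ = 0 for all j ≠ k. Then there is a C¹ function γ : [0,∞) → ℝ with γ(0) = 0 such that ⟨θⱼ(t), θₖ(t)⟩ = γ(t) for all t ≥ 0 and all j ≠ k, and γ satisfies the ODE γ̇(t) = 2 e^{βγ(t)} (1 − γ(t)) ((n−1)γ(t) + 1) / ((n−1) e^{βγ(t)} + e^{β}). -/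
open Filter Real
open scoped RealInnerProductSpace BigOperators

/-- Orthogonal projection onto the tangent space of the unit sphere at `θ`. -/
noncomputable def sphereProj {d : ℕ} (θ y : EuclideanSpace ℝ (Fin d)) :
    EuclideanSpace ℝ (Fin d) :=
  y - ⟪y, θ⟫ • θ

noncomputable def Bm (n : ℕ) (β : ℝ) (M : Fin n → Fin n → ℝ) (j k : Fin n) : ℝ :=
  (∑ l, Real.exp (β * M j l))⁻¹ * ∑ m, Real.exp (β * M j m) * M m k

noncomputable def Vf (n : ℕ) (β : ℝ) (M : Fin n → Fin n → ℝ) : Fin n → Fin n → ℝ :=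
  fun j k => (Bm n β M j k - Bm n β M j j * M j k) + (Bm n β M k j - Bm n β M k k * M j k)

lemma denom_pos (n : ℕ) (β : ℝ) (M : Fin n → Fin n → ℝ) (j : Fin n) :
    0 < ∑ l, Real.exp (β * M j l) :=
  Finset.sum_pos (fun _ _ => Real.exp_pos _) ⟨j, Finset.mem_univ j⟩

lemma contDiff_Vf (n : ℕ) (β : ℝ) : ContDiff ℝ 1 (Vf n β) := by
  have hev : ∀ j k : Fin n, ContDiff ℝ 1 (fun M : Fin n → Fin n → ℝ => M j k) :=
    fun j k => contDiff_apply_apply ℝ ℝ j k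
  have hexp : ∀ j l : Fin n, ContDiff ℝ 1 (fun M : Fin n → Fin n → ℝ => Real.exp (β * M j l)) :=
    fun j l => (Real.contDiff_exp.of_le le_top).comp (contDiff_const.mul (hev j l))
  have hden : ∀ j : Fin n, ContDiff ℝ 1 (fun M : Fin n → Fin n → ℝ => ∑ l, Real.exp (β * M j l)) :=
    fun j => ContDiff.sum fun l _ => hexp j l
  have hBm : ∀ j k : Fin n, ContDiff ℝ 1 (fun M => Bm n β M j k) := by
    intro j k
    exact ((hden j).inv fun M => (denom_pos n β M j).ne').mul
      (ContDiff.sum fun m _ => (hexp j m).mul (hev m k))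
  rw [contDiff_pi]
  intro j
  rw [contDiff_pi]
  intro k
  exact ((hBm j k).sub ((hBm j j).mul (hev j k))).add ((hBm k j).sub ((hBm k k).mul (hev j k)))

lemma lipschitz_Vf (n : ℕ) (β : ℝ) :
    ∃ K : NNReal, LipschitzOnWith K (Vf n β) (Metric.closedBall 0 1) := by
  have hV := contDiff_Vf n β
  have hcont : Continuous fun M => ‖fderiv ℝ (Vf n β) M‖ :=
    (hV.continuous_fderiv one_ne_zero).norm
  obtain ⟨C, hC⟩ := (isCompact_closedBall (0 : Fin n → Fin n → ℝ) 1).exists_bound_of_continuousOn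
    hcont.continuousOn
  refine ⟨C.toNNReal, Convex.lipschitzOnWith_of_nnnorm_fderiv_le
    (fun M _ => (hV.differentiable one_ne_zero).differentiableAt) (fun M hM => ?_)
    (convex_closedBall _ _)⟩
  have := hC M hM
  rw [Real.norm_eq_abs, abs_norm] at this
  exact (NNReal.coe_le_coe.mp (by simpa [Real.coe_toNNReal', le_max_iff] using Or.inl this))

lemma Bm_perm (n : ℕ) (β : ℝ) (M : Fin n → Fin n → ℝ) (σ : Equiv.Perm (Fin n)) (j k : Fin n) :
    Bm n β (fun a b => M (σ a) (σ b)) j k = Bm n β M (σ j) (σ k) := by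
  unfold Bm
  rw [← Equiv.sum_comp σ (fun l => Real.exp (β * M (σ j) l)),
    ← Equiv.sum_comp σ (fun m => Real.exp (β * M (σ j) m) * M m (σ k))]

lemma Vf_perm (n : ℕ) (β : ℝ) (M : Fin n → Fin n → ℝ) (σ : Equiv.Perm (Fin n)) (j k : Fin n) :
    Vf n β (fun a b => M (σ a) (σ b)) j k = Vf n β M (σ j) (σ k) := by
  unfold Vf
  rw [Bm_perm, Bm_perm, Bm_perm, Bm_perm]

lemma exists_perm {n : ℕ} {j0 k0 j k : Fin n} (h0 : j0 ≠ k0) (h : j ≠ k) :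
    ∃ σ : Equiv.Perm (Fin n), σ j0 = j ∧ σ k0 = k := by
  refine ⟨(Equiv.swap (Equiv.swap j0 j k0) k) * (Equiv.swap j0 j), ?_, ?_⟩
  · have hjc : j ≠ Equiv.swap j0 j k0 := by
      intro hcontra
      have h2 := congrArg (Equiv.swap j0 j) hcontra
      rw [Equiv.swap_apply_right, Equiv.swap_apply_self] at h2
      exact h0 h2
    simp only [Equiv.Perm.mul_apply, Equiv.swap_apply_left]
    exact Equiv.swap_apply_of_ne_of_ne hjc h
  · simp only [Equiv.Perm.mul_apply]
    exact Equiv.swap_apply_left _ _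

lemma Vf_symm_val (n : ℕ) (hn : 2 ≤ n) (β g : ℝ) (M : Fin n → Fin n → ℝ)
    (hdiag : ∀ j, M j j = 1) (hoff : ∀ j k : Fin n, j ≠ k → M j k = g)
    {j k : Fin n} (hjk : j ≠ k) :
    Vf n β M j k =
      2 * Real.exp (β * g) * (1 - g) * ((n - 1) * g + 1) /
        ((n - 1) * Real.exp (β * g) + Real.exp β) := by
  have hnpos : (0:ℕ) < n := by omega
  have hrow : ∀ a : Fin n, ∑ l, Real.exp (β * M a l) =
      Real.exp β + ((n:ℝ) - 1) * Real.exp (β * g) := by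
    intro a
    rw [← Finset.add_sum_erase _ _ (Finset.mem_univ a), hdiag a, mul_one]
    congr 1
    rw [Finset.sum_congr rfl (fun l hl => by
      rw [hoff a l (Ne.symm (Finset.ne_of_mem_erase hl))])]
    rw [Finset.sum_const, Finset.card_erase_of_mem (Finset.mem_univ a), Finset.card_univ,
      Fintype.card_fin, nsmul_eq_mul]
    congr 1
    push_cast [Nat.cast_sub (by omega : 1 ≤ n)]
    ring
  have hdiagsum : ∀ a : Fin n, ∑ m, Real.exp (β * M a m) * M m a =
      Real.exp β + ((n:ℝ) - 1) * (Real.exp (β * g) * g) := by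
    intro a
    rw [← Finset.add_sum_erase _ _ (Finset.mem_univ a), hdiag a, mul_one, mul_one]
    congr 1
    rw [Finset.sum_congr rfl (fun l hl => by
      rw [hoff a l (Ne.symm (Finset.ne_of_mem_erase hl)),
          hoff l a (Finset.ne_of_mem_erase hl)])]
    rw [Finset.sum_const, Finset.card_erase_of_mem (Finset.mem_univ a), Finset.card_univ,
      Fintype.card_fin, nsmul_eq_mul]
    congr 1
    push_cast [Nat.cast_sub (by omega : 1 ≤ n)]
    ring
  have hcross : ∀ a b : Fin n, a ≠ b → ∑ m, Real.exp (β * M a m) * M m b =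
      Real.exp β * g + Real.exp (β * g) + ((n:ℝ) - 2) * (Real.exp (β * g) * g) := by
    intro a b hab
    rw [← Finset.add_sum_erase _ _ (Finset.mem_univ a), hdiag a, hoff a b hab, mul_one]
    have hb : b ∈ Finset.univ.erase a := Finset.mem_erase.mpr ⟨Ne.symm hab, Finset.mem_univ b⟩
    rw [← Finset.add_sum_erase _ _ hb, hoff a b hab, hdiag b, mul_one]
    have : ∑ m ∈ (Finset.univ.erase a).erase b, Real.exp (β * M a m) * M m b =
        ((n:ℝ) - 2) * (Real.exp (β * g) * g) := by
      rw [Finset.sum_congr rfl (fun l hl => by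
        have hlb : l ≠ b := Finset.ne_of_mem_erase hl
        have hla : l ≠ a := Finset.ne_of_mem_erase (Finset.mem_of_mem_erase hl)
        rw [hoff a l (Ne.symm hla), hoff l b hlb])]
      rw [Finset.sum_const, Finset.card_erase_of_mem hb,
        Finset.card_erase_of_mem (Finset.mem_univ a), Finset.card_univ,
        Fintype.card_fin, nsmul_eq_mul]
      congr 1
      rw [show n - 1 - 1 = n - 2 from by omega]
      push_cast [Nat.cast_sub (by omega : 2 ≤ n)]
      ring
    rw [this]
    ring
  have hD : Real.exp β + ((n:ℝ) - 1) * Real.exp (β * g) > 0 := by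
    have h1 : (1:ℝ) ≤ (n:ℝ) - 1 := by
      have : (2:ℝ) ≤ (n:ℝ) := by exact_mod_cast hn
      linarith
    have := Real.exp_pos β
    have := Real.exp_pos (β * g)
    nlinarith
  unfold Vf Bm
  rw [hrow j, hrow k, hdiagsum j, hdiagsum k, hcross j k hjk, hcross k j (Ne.symm hjk),
    hoff j k hjk]
  have hD2 : ((n:ℝ) - 1) * Real.exp (β * g) + Real.exp β ≠ 0 := by
    rw [add_comm]; exact hD.ne'
  field_simp [hD.ne', hD2]
  ring

noncomputable def gram (d n : ℕ) (θ : ℝ → Fin n → EuclideanSpace ℝ (Fin d)) (t : ℝ) :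
    Fin n → Fin n → ℝ :=
  fun j k => ⟪θ t j, θ t k⟫

/-- Post-LN dynamics from a symmetric orthogonal initialization: the common
cosine similarity `γ(t) = ⟨θⱼ(t), θₖ(t)⟩` (for `j ≠ k`) is well defined and satisfies the
symmetric Post-LN ODE. -/
theorem postLN_symmetric_cosine_ODE (d n : ℕ) (hn : 2 ≤ n) (hnd : n ≤ d)
    (β : ℝ) (hβ : 0 < β)
    (θ : ℝ → Fin n → EuclideanSpace ℝ (Fin d))
    (hnorm : ∀ t, 0 ≤ t → ∀ j, ‖θ t j‖ = 1)
    (hdyn : ∀ t, 0 ≤ t → ∀ j,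
      HasDerivAt (fun s => θ s j) (sphereProj (θ t j) (attn β (θ t) j)) t)
    (horth : ∀ j k : Fin n, j ≠ k → ⟪θ 0 j, θ 0 k⟫ = 0) :
    ∃ γ : ℝ → ℝ, γ 0 = 0 ∧
      (∀ t, 0 ≤ t → ∀ j k : Fin n, j ≠ k → ⟪θ t j, θ t k⟫ = γ t) ∧
      (∀ t, 0 ≤ t → HasDerivAt γ
        (2 * Real.exp (β * γ t) * (1 - γ t) * ((n - 1) * γ t + 1) /
          ((n - 1) * Real.exp (β * γ t) + Real.exp β)) t) := by
  -- inner products with the attention vector give `Bm`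
  have hA : ∀ t (j k : Fin n), ⟪attn β (θ t) j, θ t k⟫ = Bm n β (gram d n θ t) j k := by
    intro t j k
    simp only [attn, Bm, gram, real_inner_smul_left, sum_inner]
  have hP : ∀ t (j k : Fin n), ⟪sphereProj (θ t j) (attn β (θ t) j), θ t k⟫
      = Bm n β (gram d n θ t) j k - Bm n β (gram d n θ t) j j * gram d n θ t j k := by
    intro t j k
    rw [sphereProj, inner_sub_left, real_inner_smul_left, hA, hA]
    simp only [gram]
  -- the Gram matrix satisfies the autonomous ODE given by `Vf`
  have hGd : ∀ t, 0 ≤ t → HasDerivAt (gram d n θ) (Vf n β (gram d n θ t)) t := by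
    intro t ht
    rw [hasDerivAt_pi]; intro j
    rw [hasDerivAt_pi]; intro k
    have h := HasDerivAt.inner ℝ (hdyn t ht j) (hdyn t ht k)
    have hfun : (fun x => gram d n θ x j k) = fun s => ⟪θ s j, θ s k⟫ := rfl
    rw [hfun]
    refine h.congr_deriv ?_
    have hc : ⟪θ t j, sphereProj (θ t k) (attn β (θ t) k)⟫
        = ⟪sphereProj (θ t k) (attn β (θ t) k), θ t j⟫ := real_inner_comm _ _
    rw [hc, hP, hP]
    simp only [Vf]
    rw [show gram d n θ t k j = gram d n θ t j k from real_inner_comm _ _]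
    ring
  -- trajectories stay in the unit ball
  have hmem : ∀ s, 0 ≤ s → ∀ σ : Equiv.Perm (Fin n),
      (fun a b => gram d n θ s (σ a) (σ b)) ∈ Metric.closedBall (0 : Fin n → Fin n → ℝ) 1 := by
    intro s hs σ
    rw [mem_closedBall_zero_iff, pi_norm_le_iff_of_nonneg zero_le_one]
    intro a
    rw [pi_norm_le_iff_of_nonneg zero_le_one]
    intro b
    rw [Real.norm_eq_abs]
    calc |gram d n θ s (σ a) (σ b)| ≤ ‖θ s (σ a)‖ * ‖θ s (σ b)‖ := abs_real_inner_le_norm _ _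
      _ ≤ 1 := by rw [hnorm s hs, hnorm s hs]; norm_num
  have hinit : ∀ j k : Fin n, gram d n θ 0 j k = if j = k then 1 else 0 := by
    intro j k
    by_cases h : j = k
    · subst h
      rw [if_pos rfl]
      simp only [gram]
      rw [real_inner_self_eq_norm_mul_norm, hnorm 0 le_rfl, one_mul]
    · simp only [gram, if_neg h]
      exact horth j k h
  -- permutation symmetry via uniqueness of ODE solutions
  obtain ⟨K, hK⟩ := lipschitz_Vf n β
  have hperm : ∀ (σ : Equiv.Perm (Fin n)) (t : ℝ), 0 ≤ t →
      gram d n θ t = fun a b => gram d n θ t (σ a) (σ b) := by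
    intro σ t ht
    have hgd : ∀ s, 0 ≤ s → HasDerivAt (fun u a b => gram d n θ u (σ a) (σ b))
        (Vf n β (fun a b => gram d n θ s (σ a) (σ b))) s := by
      intro s hs
      rw [hasDerivAt_pi]; intro a
      rw [hasDerivAt_pi]; intro b
      rw [show Vf n β (fun a b => gram d n θ s (σ a) (σ b)) a b
        = Vf n β (gram d n θ s) (σ a) (σ b) from Vf_perm n β _ σ a b]
      exact hasDerivAt_pi.1 (hasDerivAt_pi.1 (hGd s hs) (σ a)) (σ b)
    have key := ODE_solution_unique_of_mem_Icc_right
      (v := fun _ : ℝ => Vf n β) (s := fun _ : ℝ => Metric.closedBall 0 1) (K := K)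
      (fun _ _ => hK)
      (f := gram d n θ) (g := fun u a b => gram d n θ u (σ a) (σ b)) (a := 0) (b := t + 1)
      (fun s hs => ((hGd s hs.1).continuousAt).continuousWithinAt)
      (fun s hs => (hGd s hs.1).hasDerivWithinAt)
      (fun s hs => by simpa using hmem s hs.1 (Equiv.refl (Fin n)))
      (fun s hs => ((hgd s hs.1).continuousAt).continuousWithinAt)
      (fun s hs => (hgd s hs.1).hasDerivWithinAt)
      (fun s hs => hmem s hs.1 σ)
      (by
        funext a b
        simp only [hinit, EmbeddingLike.apply_eq_iff_eq])
    exact key ⟨ht, by linarith⟩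
  -- the common cosine similarity
  have hn0 : 0 < n := by omega
  set j0 : Fin n := ⟨0, by omega⟩ with hj0
  set k0 : Fin n := ⟨1, by omega⟩ with hk0
  have hne : j0 ≠ k0 := by
    intro h
    have := congrArg Fin.val h
    simp [hj0, hk0] at this
  refine ⟨fun t => gram d n θ t j0 k0, ?_, ?_, ?_⟩
  · simp only [gram]
    exact horth j0 k0 hne
  · intro t ht j k hjk
    obtain ⟨σ, hσ1, hσ2⟩ := exists_perm hne hjk
    have := congrFun (congrFun (hperm σ t ht) j0) k0
    rw [hσ1, hσ2] at this
    exact this.symm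
  · intro t ht
    have hd := hasDerivAt_pi.1 (hasDerivAt_pi.1 (hGd t ht) j0) k0
    have hdiag : ∀ j, gram d n θ t j j = 1 := by
      intro j
      simp only [gram]
      rw [real_inner_self_eq_norm_mul_norm, hnorm t ht, one_mul]
    have hoff : ∀ j k : Fin n, j ≠ k → gram d n θ t j k = gram d n θ t j0 k0 := by
      intro j k hjk
      obtain ⟨σ, hσ1, hσ2⟩ := exists_perm hne hjk
      have := congrFun (congrFun (hperm σ t ht) j0) k0
      rw [hσ1, hσ2] at this
      exact this.symm
    exact hd.congr_deriv (Vf_symm_val n hn β (gram d n θ t j0 k0) (gram d n θ t) hdiag hoff hne)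
end

section
/- Let n ≥ 2 and β > 0, and let γ : [0,∞) → ℝ be a C¹ solution of the Post-LN symmetric cosine-similarity ODE γ̇(t) = 2 e^{βγ(t)} (1 − γ(t)) ((n−1)γ(t) + 1) / ((n−1) e^{βγ(t)} + e^{β}) with γ(0) = 0. Then γ is strictly increasing, 0 ≤ γ(t) < 1 for all t ≥ 0, γ(t) → 1 as t → ∞, and there exists a constant C > 0 such that e^{2t}(1 − γ(t)) → C as t → ∞; in particular γ̇(t) is asymptotically equivalent to 2C e^{−2t} as t → ∞. -/
set_option maxHeartbeats 1000000

open Filter Real Set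

/-- Post-LN symmetric cosine-similarity ODE: asymptotics. -/
theorem postLN_symmetric_ODE_asymptotics (n : ℕ) (hn : 2 ≤ n) (β : ℝ) (hβ : 0 < β)
    (γ : ℝ → ℝ) (h0 : γ 0 = 0)
    (hdyn : ∀ t, 0 ≤ t → HasDerivAt γ
      (2 * Real.exp (β * γ t) * (1 - γ t) * ((n - 1) * γ t + 1) /
        ((n - 1) * Real.exp (β * γ t) + Real.exp β)) t) :
    StrictMonoOn γ (Set.Ici 0) ∧
    (∀ t, 0 ≤ t → 0 ≤ γ t ∧ γ t < 1) ∧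
    Tendsto γ atTop (nhds 1) ∧
    ∃ C : ℝ, 0 < C ∧
      Tendsto (fun t => Real.exp (2 * t) * (1 - γ t)) atTop (nhds C) ∧
      Tendsto (fun t => deriv γ t / (2 * C * Real.exp (-(2 * t)))) atTop (nhds 1) := by
  have hn2 : (2:ℝ) ≤ (n:ℝ) := by exact_mod_cast hn
  set N : ℝ := (n:ℝ) - 1 with hNdef
  have hN1 : (1:ℝ) ≤ N := by rw [hNdef]; linarith
  have hN0 : (0:ℝ) < N := by linarith
  set F : ℝ → ℝ := fun x => 2 * Real.exp (β * x) * (1 - x) * (N * x + 1) /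
      (N * Real.exp (β * x) + Real.exp β) with hFdef
  have hder : ∀ t, 0 ≤ t → HasDerivAt γ (F (γ t)) t := fun t ht => hdyn t ht
  have hγc : ContinuousOn γ (Set.Ici 0) := fun t ht =>
    ((hdyn t ht).continuousAt).continuousWithinAt
  -- denominator positive
  have hD : ∀ x : ℝ, 0 < N * Real.exp (β * x) + Real.exp β := fun x =>
    add_pos (mul_pos hN0 (Real.exp_pos _)) (Real.exp_pos _)
  -- F positive on [-(1/(2N)), 1)
  have hFpos : ∀ x : ℝ, -(1/(2*N)) ≤ x → x < 1 → 0 < F x := by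
    intro x hx hx1
    rw [hFdef]
    apply div_pos _ (hD x)
    have hE := Real.exp_pos (β * x)
    have hNx : -(1/2 : ℝ) ≤ N * x := by
      have h1 := mul_le_mul_of_nonneg_left hx hN0.le
      have h2 : N * (1/(2*N)) = 1/2 := by field_simp
      nlinarith
    have := mul_pos (mul_pos (mul_pos two_pos hE) (by linarith : (0:ℝ) < 1 - x))
      (by nlinarith [hNx] : (0:ℝ) < N * x + 1)
    linarith
  -- F x ≤ 4 (1-x) on [0,1]
  have hF4 : ∀ x : ℝ, 0 ≤ x → x ≤ 1 → F x ≤ 4 * (1 - x) := by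
    intro x hx hx1
    rw [hFdef]
    rw [div_le_iff₀ (hD x)]
    have hE := Real.exp_pos (β * x)
    have h1 : Real.exp (β * x) * (N * x + 1) ≤ 2 * (N * Real.exp (β * x)) := by
      nlinarith [mul_pos hN0 hE]
    nlinarith [mul_le_mul_of_nonneg_left h1 (by linarith : (0:ℝ) ≤ 2 * (1 - x)),
      Real.exp_pos β]
  -- F x ≤ 2 (1-x) on [0,1]
  have hFle2 : ∀ x : ℝ, 0 ≤ x → x ≤ 1 → F x ≤ 2 * (1 - x) := by
    intro x hx hx1
    rw [hFdef, div_le_iff₀ (hD x)]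
    have hE := Real.exp_pos (β * x)
    have hEβ : Real.exp (β * x) ≤ Real.exp β := Real.exp_le_exp.2 (by nlinarith)
    have h1 : Real.exp (β * x) * (N * x + 1) ≤ N * Real.exp (β * x) + Real.exp β := by
      nlinarith [mul_nonneg (mul_nonneg hN0.le hE.le) (by linarith : (0:ℝ) ≤ 1 - x)]
    nlinarith [mul_le_mul_of_nonneg_left h1 (by linarith : (0:ℝ) ≤ 2 * (1 - x))]
  -- quadratic bound: 2(1-x) - F x ≤ K (1-x)^2 with K = 2(β+N)
  have hFquad : ∀ x : ℝ, 0 ≤ x → x ≤ 1 →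
      2 * (1 - x) - F x ≤ (2 * (β + N)) * (1 - x) ^ 2 := by
    intro x hx hx1
    have hE := Real.exp_pos (β * x)
    have hEβ : Real.exp (β * x) ≤ Real.exp β := Real.exp_le_exp.2 (by nlinarith)
    have hE1 : Real.exp β * (1 - β * (1 - x)) ≤ Real.exp (β * x) := by
      have h := Real.add_one_le_exp (-(β * (1 - x)))
      have h2 : Real.exp β * Real.exp (-(β * (1 - x))) = Real.exp (β * x) := by
        rw [← Real.exp_add]; ring_nf
      nlinarith [Real.exp_pos β, mul_le_mul_of_nonneg_left h (Real.exp_pos β).le]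
    have key : (2 * (1 - x) - (2 * (β + N)) * (1 - x) ^ 2) * (N * Real.exp (β * x) + Real.exp β)
        ≤ 2 * Real.exp (β * x) * (1 - x) * (N * x + 1) := by
      nlinarith [Real.exp_pos β, mul_pos hN0 hE, sq_nonneg (1 - x),
        mul_le_mul_of_nonneg_left hEβ (mul_nonneg hN0.le (sq_nonneg (1 - x))),
        mul_le_mul_of_nonneg_left hE1 (by linarith : (0:ℝ) ≤ 2 * (1 - x)),
        mul_le_mul_of_nonneg_left hEβ (by positivity : (0:ℝ) ≤ 2 * β * (1-x)^2),
        mul_nonneg (mul_nonneg hN0.le hE.le) (sq_nonneg (1 - x))]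
    have key2 : 2 * (1 - x) - (2 * (β + N)) * (1 - x) ^ 2 ≤ F x := by
      rw [hFdef, le_div_iff₀ (hD x)]
      exact key
    linarith
  -- lower linear bound: c (1-x) ≤ F x on [0,1], c = 2/((N+1) e^β)
  set c : ℝ := 2 / ((N + 1) * Real.exp β) with hcdef
  have hc0 : 0 < c := by rw [hcdef]; positivity
  have hFlow : ∀ x : ℝ, 0 ≤ x → x ≤ 1 → c * (1 - x) ≤ F x := by
    intro x hx hx1
    have hE := Real.exp_pos (β * x)
    have hE1 : (1:ℝ) ≤ Real.exp (β * x) := Real.one_le_exp (by positivity)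
    have hEβ : Real.exp (β * x) ≤ Real.exp β := Real.exp_le_exp.2 (by nlinarith)
    have hcmul : c * ((N + 1) * Real.exp β) = 2 := by
      rw [hcdef]; field_simp
    rw [hFdef, le_div_iff₀ (hD x)]
    have hDle : N * Real.exp (β * x) + Real.exp β ≤ (N + 1) * Real.exp β := by nlinarith
    have h2 : c * (1 - x) * (N * Real.exp (β * x) + Real.exp β) ≤ 2 * (1 - x) := by
      calc c * (1 - x) * (N * Real.exp (β * x) + Real.exp β)
          ≤ c * (1 - x) * ((N + 1) * Real.exp β) := by
            apply mul_le_mul_of_nonneg_left hDle (mul_nonneg hc0.le (by linarith))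
        _ = 2 * (1 - x) := by rw [mul_comm c (1 - x), mul_assoc, hcmul]; ring
    have hNx : 0 ≤ N * x := mul_nonneg hN0.le hx
    have h4 : (1:ℝ) ≤ Real.exp (β * x) * (N * x + 1) := by
      nlinarith [mul_nonneg (by linarith : (0:ℝ) ≤ Real.exp (β * x) - 1) (by linarith : (0:ℝ) ≤ N * x + 1)]
    have h3 : 2 * (1 - x) ≤ 2 * Real.exp (β * x) * (1 - x) * (N * x + 1) := by
      nlinarith [mul_le_mul_of_nonneg_left h4 (by linarith : (0:ℝ) ≤ 2 * (1 - x))]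
    linarith
  -- lower bound lemma: if γ < 1 on [0,b) then γ ≥ 0 on [0,b]
  have hlow : ∀ b : ℝ, 0 ≤ b → (∀ s ∈ Set.Ico (0:ℝ) b, γ s < 1) →
      ∀ s ∈ Set.Icc (0:ℝ) b, 0 ≤ γ s := by
    intro b hb hlt
    by_contra hcon
    push_neg at hcon
    obtain ⟨a, ha, hγa⟩ := hcon
    set ε : ℝ := min (1/(2*N)) (-γ a) with hεdef
    have hε0 : 0 < ε := lt_min (by positivity) (by linarith)
    have hε1 : ε ≤ 1/(2*N) := min_le_left _ _
    have hεa : γ a ≤ -ε := by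
      have := min_le_right (1/(2*N)) (-γ a); linarith
    set S : Set ℝ := Set.Icc 0 a ∩ γ ⁻¹' (Set.Iic (-ε)) with hSdef
    have hSclosed : IsClosed S :=
      (hγc.mono Set.Icc_subset_Ici_self).preimage_isClosed_of_isClosed isClosed_Icc isClosed_Iic
    have hSne : S.Nonempty := ⟨a, ⟨⟨ha.1, le_refl a⟩, hεa⟩⟩
    have hSbdd : BddBelow S := ⟨0, fun t ht => ht.1.1⟩
    set b' := sInf S with hb'def
    have hb'S : b' ∈ S := hSclosed.csInf_mem hSne hSbdd
    have hb'0 : 0 ≤ b' := hb'S.1.1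
    have hb'a : b' ≤ a := hb'S.1.2
    have hγb' : γ b' ≤ -ε := hb'S.2
    have hb'pos : 0 < b' := by
      rcases hb'0.lt_or_eq with h | h
      · exact h
      · exfalso; rw [← h, h0] at hγb'; linarith
    have hab : ∀ t ∈ Set.Ico (0:ℝ) b', -ε < γ t := by
      intro t ht
      by_contra hc
      push_neg at hc
      have htS : t ∈ S := ⟨⟨ht.1, ht.2.le.trans hb'a⟩, hc⟩
      exact absurd (csInf_le hSbdd htS) (not_le.2 ht.2)
    have hmono : StrictMonoOn γ (Set.Icc 0 b') := by
      apply strictMonoOn_of_deriv_pos (convex_Icc _ _) (hγc.mono Set.Icc_subset_Ici_self)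
      intro t ht
      rw [interior_Icc] at ht
      rw [(hder t ht.1.le).deriv]
      apply hFpos
      · have := hab t ⟨ht.1.le, ht.2⟩; linarith
      · exact hlt t ⟨ht.1.le, lt_of_lt_of_le ht.2 (hb'a.trans ha.2)⟩
    have := hmono (Set.left_mem_Icc.2 hb'0) (Set.right_mem_Icc.2 hb'0) hb'pos
    rw [h0] at this
    linarith
  -- upper bound: γ < 1 on [0, ∞)
  have hup : ∀ t : ℝ, 0 ≤ t → γ t < 1 := by
    by_contra hcon
    push_neg at hcon
    obtain ⟨a, ha0, ha1⟩ := hcon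
    set S : Set ℝ := Set.Icc 0 a ∩ γ ⁻¹' (Set.Ici 1) with hSdef
    have hSclosed : IsClosed S :=
      (hγc.mono Set.Icc_subset_Ici_self).preimage_isClosed_of_isClosed isClosed_Icc isClosed_Ici
    have hSne : S.Nonempty := ⟨a, ⟨⟨ha0, le_refl a⟩, ha1⟩⟩
    have hSbdd : BddBelow S := ⟨0, fun t ht => ht.1.1⟩
    set t1 := sInf S with ht1def
    have ht1S : t1 ∈ S := hSclosed.csInf_mem hSne hSbdd
    have ht10 : 0 ≤ t1 := ht1S.1.1
    have ht1a : t1 ≤ a := ht1S.1.2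
    have hγt1 : 1 ≤ γ t1 := ht1S.2
    have ht1pos : 0 < t1 := by
      rcases ht10.lt_or_eq with h | h
      · exact h
      · exfalso; rw [← h, h0] at hγt1; linarith
    have hlt1 : ∀ t ∈ Set.Ico (0:ℝ) t1, γ t < 1 := by
      intro t ht
      by_contra hc
      push_neg at hc
      exact absurd (csInf_le hSbdd ⟨⟨ht.1, ht.2.le.trans ht1a⟩, hc⟩) (not_le.2 ht.2)
    have hγt1' : γ t1 = 1 := by
      refine le_antisymm ?_ hγt1
      have htd : Tendsto γ (nhdsWithin t1 (Set.Iio t1)) (nhds (γ t1)) :=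
        ((hdyn t1 ht10).continuousAt.tendsto).mono_left nhdsWithin_le_nhds
      refine le_of_tendsto htd ?_
      filter_upwards [Ioo_mem_nhdsLT_of_mem (Set.right_mem_Ioc.mpr ht1pos)] with t ht'
      exact (hlt1 t ⟨ht'.1.le, ht'.2⟩).le
    have hbd : ∀ t ∈ Set.Icc (0:ℝ) t1, 0 ≤ γ t ∧ γ t ≤ 1 := by
      intro t ht
      refine ⟨hlow t1 ht10 hlt1 t ht, ?_⟩
      rcases eq_or_lt_of_le ht.2 with h | h
      · rw [h, hγt1']
      · exact (hlt1 t ⟨ht.1, h⟩).le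
    have hwmono : MonotoneOn (fun s => Real.exp (5*s) * (1 - γ s)) (Set.Icc 0 t1) := by
      apply monotoneOn_of_deriv_nonneg (convex_Icc _ _)
      · exact ((Real.continuous_exp.comp (continuous_const.mul continuous_id)).continuousOn).mul
          (continuousOn_const.sub (hγc.mono Set.Icc_subset_Ici_self))
      · intro t ht
        rw [interior_Icc] at ht
        have hlin : HasDerivAt (fun s : ℝ => 5*s) (5:ℝ) t := by
          simpa using (hasDerivAt_id t).const_mul (5:ℝ)
        exact (hlin.exp.mul ((hasDerivAt_const t (1:ℝ)).sub
          (hder t ht.1.le))).differentiableAt.differentiableWithinAt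
      · intro t ht
        rw [interior_Icc] at ht
        have hlin : HasDerivAt (fun s : ℝ => 5*s) (5:ℝ) t := by
          simpa using (hasDerivAt_id t).const_mul (5:ℝ)
        have hdw : HasDerivAt (fun s => Real.exp (5*s) * (1 - γ s))
            (Real.exp (5*t) * 5 * (1 - γ t) + Real.exp (5*t) * (0 - F (γ t))) t :=
          hlin.exp.mul ((hasDerivAt_const t (1:ℝ)).sub (hder t ht.1.le))
        rw [hdw.deriv]
        have hbt := hbd t ⟨ht.1.le, ht.2.le⟩
        have h4 := hF4 (γ t) hbt.1 hbt.2
        have hE := Real.exp_pos (5*t)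
        nlinarith [mul_le_mul_of_nonneg_left h4 hE.le,
          mul_nonneg hE.le (by linarith : (0:ℝ) ≤ 1 - γ t)]
    have hcomp := hwmono (Set.left_mem_Icc.2 ht10) (Set.right_mem_Icc.2 ht10) ht10
    simp only [mul_zero, h0, hγt1', sub_zero, sub_self, mul_one, Real.exp_zero] at hcomp
    linarith
  have hmem : ∀ t, 0 ≤ t → 0 ≤ γ t ∧ γ t < 1 := fun t ht =>
    ⟨hlow t ht (fun s hs => hup s hs.1) t ⟨ht, le_refl t⟩, hup t ht⟩
  have hstrict : StrictMonoOn γ (Set.Ici 0) := by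
    apply strictMonoOn_of_deriv_pos (convex_Ici 0) hγc
    intro t ht
    rw [interior_Ici] at ht
    rw [(hder t ht.le).deriv]
    obtain ⟨h1, h2⟩ := hmem t ht.le
    refine hFpos _ ?_ h2
    have : (0:ℝ) ≤ 1/(2*N) := by positivity
    linarith
  -- Grönwall-type decay: 1 - γ t ≤ exp (-(c t))
  have hupos : ∀ t : ℝ, 0 ≤ t → 0 < 1 - γ t := fun t ht => by linarith [(hmem t ht).2]
  have hA : AntitoneOn (fun s => Real.exp (c*s) * (1 - γ s)) (Set.Ici 0) := by
    apply antitoneOn_of_deriv_nonpos (convex_Ici 0)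
    · exact ((Real.continuous_exp.comp (continuous_const.mul continuous_id)).continuousOn).mul
        (continuousOn_const.sub hγc)
    · intro t ht
      rw [interior_Ici] at ht
      have hlin : HasDerivAt (fun s : ℝ => c*s) c t := by
        simpa using (hasDerivAt_id t).const_mul c
      exact (hlin.exp.mul ((hasDerivAt_const t (1:ℝ)).sub
        (hder t ht.le))).differentiableAt.differentiableWithinAt
    · intro t ht
      rw [interior_Ici] at ht
      have hlin : HasDerivAt (fun s : ℝ => c*s) c t := by
        simpa using (hasDerivAt_id t).const_mul c
      have hdw : HasDerivAt (fun s => Real.exp (c*s) * (1 - γ s))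
          (Real.exp (c*t) * c * (1 - γ t) + Real.exp (c*t) * (0 - F (γ t))) t :=
        hlin.exp.mul ((hasDerivAt_const t (1:ℝ)).sub (hder t ht.le))
      rw [hdw.deriv]
      obtain ⟨h1, h2⟩ := hmem t ht.le
      have hlo := hFlow (γ t) h1 h2.le
      have hE := Real.exp_pos (c*t)
      nlinarith [mul_le_mul_of_nonneg_left hlo hE.le]
  have hue : ∀ t : ℝ, 0 ≤ t → 1 - γ t ≤ Real.exp (-(c*t)) := by
    intro t ht
    have hcomp := hA (Set.self_mem_Ici) (Set.mem_Ici.2 ht) ht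
    simp only [mul_zero, h0, sub_zero, Real.exp_zero, one_mul] at hcomp
    have hexp : Real.exp (-(c*t)) * Real.exp (c*t) = 1 := by
      rw [← Real.exp_add]; simp
    calc 1 - γ t = Real.exp (-(c*t)) * (Real.exp (c*t) * (1 - γ t)) := by
          rw [← mul_assoc, hexp, one_mul]
      _ ≤ Real.exp (-(c*t)) * 1 := mul_le_mul_of_nonneg_left hcomp (Real.exp_pos _).le
      _ = Real.exp (-(c*t)) := mul_one _
  -- h(t) = 2t + log(1-γ t) is monotone and bounded above
  have hhd : ∀ t : ℝ, 0 ≤ t → HasDerivAt (fun s => 2*s + Real.log (1 - γ s))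
      (2 + (0 - F (γ t)) / (1 - γ t)) t := by
    intro t ht
    have hlin : HasDerivAt (fun s : ℝ => 2*s) (2:ℝ) t := by
      simpa using (hasDerivAt_id t).const_mul (2:ℝ)
    exact hlin.add (((hasDerivAt_const t (1:ℝ)).sub (hder t ht)).log (hupos t ht).ne')
  have hhmono : MonotoneOn (fun s => 2*s + Real.log (1 - γ s)) (Set.Ici 0) := by
    apply monotoneOn_of_deriv_nonneg (convex_Ici 0)
    · exact (continuous_const.mul continuous_id).continuousOn.add
        ((continuousOn_const.sub hγc).log (fun t ht => (hupos t ht).ne'))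
    · intro t ht
      rw [interior_Ici] at ht
      exact (hhd t ht.le).differentiableAt.differentiableWithinAt
    · intro t ht
      rw [interior_Ici] at ht
      rw [(hhd t ht.le).deriv]
      obtain ⟨h1, h2⟩ := hmem t ht.le
      have hF2 := hFle2 (γ t) h1 h2.le
      have hdiv : F (γ t) / (1 - γ t) ≤ 2 := by
        rw [div_le_iff₀ (hupos t ht.le)]; linarith
      rw [zero_sub, neg_div]
      linarith
  set K : ℝ := 2 * (β + N) with hKdef
  have hK0 : 0 < K := by rw [hKdef]; positivity
  have hψ : AntitoneOn (fun s => (2*s + Real.log (1 - γ s)) + (K/c) * Real.exp (-(c*s)))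
      (Set.Ici 0) := by
    apply antitoneOn_of_deriv_nonpos (convex_Ici 0)
    · exact ((continuous_const.mul continuous_id).continuousOn.add
        ((continuousOn_const.sub hγc).log (fun t ht => (hupos t ht).ne'))).add
        (continuousOn_const.mul (Real.continuous_exp.comp
          (continuous_const.mul continuous_id).neg).continuousOn)
    · intro t ht
      rw [interior_Ici] at ht
      have hlin2 : HasDerivAt (fun s : ℝ => -(c*s)) (-c) t := by
        exact (((hasDerivAt_id t).const_mul c).neg).congr_deriv (by ring)
      exact ((hhd t ht.le).add ((hlin2.exp).const_mul
        (K/c))).differentiableAt.differentiableWithinAt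
    · intro t ht
      rw [interior_Ici] at ht
      have hlin2 : HasDerivAt (fun s : ℝ => -(c*s)) (-c) t := by
        exact (((hasDerivAt_id t).const_mul c).neg).congr_deriv (by ring)
      have hdw := (hhd t ht.le).add ((hlin2.exp).const_mul (K/c))
      rw [show deriv (fun s => 2 * s + Real.log (1 - γ s) + K / c * Real.exp (-(c * s))) t = _ from hdw.deriv]
      obtain ⟨h1, h2⟩ := hmem t ht.le
      have hu := hupos t ht.le
      have hq := hFquad (γ t) h1 h2.le
      have hu_e := hue t ht.le
      have key : (2 - K * Real.exp (-(c*t))) * (1 - γ t) ≤ F (γ t) := by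
        nlinarith [mul_le_mul_of_nonneg_left hu_e (mul_nonneg hK0.le (by linarith : (0:ℝ) ≤ 1 - γ t))]
      have h5 : 2 - K * Real.exp (-(c*t)) ≤ F (γ t) / (1 - γ t) := by
        rw [le_div_iff₀ hu]; exact key
      have hsimp : K / c * (Real.exp (-(c*t)) * -c) = -(K * Real.exp (-(c*t))) := by
        field_simp
      rw [hsimp, zero_sub, neg_div]
      linarith
  have hhub : ∀ t : ℝ, 0 ≤ t → 2*t + Real.log (1 - γ t) ≤ K/c := by
    intro t ht
    have hcomp := hψ (Set.self_mem_Ici) (Set.mem_Ici.2 ht) ht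
    simp only [mul_zero, h0, sub_zero, Real.log_one, add_zero, zero_add, neg_zero,
      Real.exp_zero, mul_one] at hcomp
    have : 0 ≤ (K/c) * Real.exp (-(c*t)) := by positivity
    linarith
  -- convergence of h
  have hmax : Monotone (fun t => 2*(max t 0) + Real.log (1 - γ (max t 0))) := by
    intro s t hst
    exact hhmono (Set.mem_Ici.2 (le_max_right s 0)) (Set.mem_Ici.2 (le_max_right t 0))
      (max_le_max hst (le_refl 0))
  have hbddU : BddAbove (Set.range fun t => 2*(max t 0) + Real.log (1 - γ (max t 0))) := by
    refine ⟨K/c, ?_⟩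
    rintro x ⟨t, rfl⟩
    exact hhub _ (le_max_right t 0)
  have htendh0 := tendsto_atTop_ciSup hmax hbddU
  set L' : ℝ := ⨆ t : ℝ, (2*(max t 0) + Real.log (1 - γ (max t 0))) with hL'def
  have htendh : Tendsto (fun t => 2*t + Real.log (1 - γ t)) atTop (nhds L') := by
    refine htendh0.congr' ?_
    filter_upwards [eventually_ge_atTop (0:ℝ)] with t ht
    rw [max_eq_left ht]
  set C : ℝ := Real.exp L' with hCdef
  have hC0 : 0 < C := Real.exp_pos _
  have hEtend : Tendsto (fun t => Real.exp (2*t) * (1 - γ t)) atTop (nhds C) := by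
    have h1 : Tendsto (fun t => Real.exp (2*t + Real.log (1 - γ t))) atTop (nhds C) :=
      (Real.continuous_exp.continuousAt.tendsto).comp htendh
    refine h1.congr' ?_
    filter_upwards [eventually_ge_atTop (0:ℝ)] with t ht
    rw [Real.exp_add, Real.exp_log (hupos t ht)]
  have hexp2 : Tendsto (fun t : ℝ => Real.exp (-(2*t))) atTop (nhds 0) :=
    Real.tendsto_exp_neg_atTop_nhds_zero.comp (tendsto_const_mul_atTop_of_pos two_pos |>.2 tendsto_id)
  have hu0 : Tendsto (fun t => 1 - γ t) atTop (nhds 0) := by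
    have h1 := hexp2.mul hEtend
    rw [zero_mul] at h1
    refine h1.congr (fun t => ?_)
    rw [← mul_assoc, ← Real.exp_add, neg_add_cancel, Real.exp_zero, one_mul]
  have hγ1 : Tendsto γ atTop (nhds 1) := by
    have h1 := (tendsto_const_nhds : Tendsto (fun _ : ℝ => (1:ℝ)) atTop (nhds 1)).sub hu0
    rw [sub_zero] at h1
    refine h1.congr (fun t => ?_)
    ring
  -- derivative ratio
  have hfactor1 : Tendsto (fun t => Real.exp (2*t) * (1 - γ t) / C) atTop (nhds 1) := by
    have h1 := hEtend.div_const C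
    rwa [div_self hC0.ne'] at h1
  have hfactor2 : Tendsto (fun t => F (γ t) / (2 * (1 - γ t))) atTop (nhds 1) := by
    have hlo : Tendsto (fun t => 1 - (K/2) * (1 - γ t)) atTop (nhds 1) := by
      have h1 := (tendsto_const_nhds : Tendsto (fun _ : ℝ => K/2) atTop (nhds (K/2))).mul hu0
      rw [mul_zero] at h1
      have h2 := (tendsto_const_nhds : Tendsto (fun _ : ℝ => (1:ℝ)) atTop (nhds 1)).sub h1
      rwa [sub_zero] at h2
    refine tendsto_of_tendsto_of_tendsto_of_le_of_le' hlo tendsto_const_nhds ?_ ?_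
    · filter_upwards [eventually_ge_atTop (0:ℝ)] with t ht
      obtain ⟨h1, h2⟩ := hmem t ht
      have hu := hupos t ht
      have hq := hFquad (γ t) h1 h2.le
      rw [le_div_iff₀ (by linarith : (0:ℝ) < 2 * (1 - γ t))]
      nlinarith
    · filter_upwards [eventually_ge_atTop (0:ℝ)] with t ht
      obtain ⟨h1, h2⟩ := hmem t ht
      have hu := hupos t ht
      have hF2 := hFle2 (γ t) h1 h2.le
      rw [div_le_one (by linarith : (0:ℝ) < 2 * (1 - γ t))]
      linarith
  have hratio : Tendsto (fun t => deriv γ t / (2 * C * Real.exp (-(2 * t)))) atTop (nhds 1) := by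
    have hprod := hfactor1.mul hfactor2
    rw [mul_one] at hprod
    refine hprod.congr' ?_
    filter_upwards [eventually_ge_atTop (0:ℝ)] with t ht
    have hu := hupos t ht
    rw [(hder t ht).deriv, Real.exp_neg]
    field_simp
  exact ⟨hstrict, hmem, hγ1, C, hC0, hEtend, hratio⟩
end

section
/- Let n ≥ 2, β > 0 and r₀ > 0, and let (γ, r) : [0,∞) → ℝ × (0,∞) be a C¹ solution of the Pre-LN symmetric system ṙ(t) = ((n−1) e^{βγ(t)} γ(t) + e^{β}) / ((n−1) e^{βγ(t)} + e^{β}) and γ̇(t) = 2 e^{βγ(t)} (1 − γ(t)) ((n−1)γ(t) + 1) / ( r(t) ((n−1) e^{βγ(t)} + e^{β}) ), with γ(0) = 0 and r(0) = r₀. Then γ is increasing with 0 ≤ γ(t) < 1 for all t, γ(t) → 1 as t → ∞, and r(t)/t → 1 as t → ∞. -/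
open Filter Real Set

lemma monoOn_Ici_of_deriv (a : ℝ) (f f' : ℝ → ℝ)
    (hd : ∀ t ∈ Set.Ici a, HasDerivAt f (f' t) t)
    (hnn : ∀ t ∈ Set.Ici a, 0 ≤ f' t) : MonotoneOn f (Set.Ici a) := by
  apply monotoneOn_of_deriv_nonneg (convex_Ici a)
  · exact fun x hx => (hd x hx).continuousAt.continuousWithinAt
  · intro x hx
    rw [interior_Ici] at hx
    exact ((hd x (Set.Ioi_subset_Ici_self hx)).differentiableAt).differentiableWithinAt
  · intro x hx
    rw [interior_Ici] at hx
    rw [(hd x (Set.Ioi_subset_Ici_self hx)).deriv]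
    exact hnn x (Set.Ioi_subset_Ici_self hx)

lemma pos_of_linode (f g : ℝ → ℝ) (hf0 : 0 < f 0)
    (hd : ∀ t, 0 ≤ t → HasDerivAt f (g t * f t) t)
    (hgc : ContinuousOn g (Set.Ici 0)) :
    ∀ t, 0 ≤ t → 0 < f t := by
  have hfc : ContinuousOn f (Set.Ici 0) :=
    fun x hx => (hd x hx).continuousAt.continuousWithinAt
  intro T hT
  rcases eq_or_lt_of_le hT with h0 | hTpos
  · rwa [← h0]
  have hne : ∀ τ ∈ Set.Icc (0:ℝ) T, f τ ≠ 0 := by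
    intro τ hτ hfτ
    rcases eq_or_lt_of_le hτ.1 with h0 | hτpos
    · rw [← h0] at hfτ; exact hf0.ne' hfτ
    obtain ⟨K, hK⟩ := (isCompact_Icc (a := (0:ℝ)) (b := T)).exists_bound_of_continuousOn
      (hgc.mono (Set.Icc_subset_Ici_self))
    set F : ℝ → ℝ := fun s => f (τ - s) with hF
    have key : ∀ s ∈ Set.Icc (0:ℝ) τ, ‖F s‖ ≤ gronwallBound 0 K 0 (s - 0) := by
      apply norm_le_gronwallBound_of_norm_deriv_right_le
        (f' := fun s => (g (τ - s) * f (τ - s)) * (-1))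
      · exact (hfc.comp ((continuous_const.sub continuous_id).continuousOn)
          (fun x hx => by simp [Set.mem_Ici]; linarith [hx.2]))
      · intro s hs
        have h1 : HasDerivAt (fun s : ℝ => τ - s) (-1) s := by
          simpa using (hasDerivAt_id' s).const_sub τ
        have h2 : HasDerivAt f (g (τ - s) * f (τ - s)) (τ - s) := by
          apply hd; linarith [hs.2]
        exact (h2.comp s h1).hasDerivWithinAt
      · simp [hF, hfτ]
      · intro s hs
        have hmem : τ - s ∈ Set.Icc (0:ℝ) T := by
          constructor
          · linarith [hs.2]
          · linarith [hτ.2, hs.1]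
        calc ‖(g (τ - s) * f (τ - s)) * (-1)‖ = ‖g (τ - s)‖ * ‖F s‖ := by
              simp [hF, abs_mul]
          _ ≤ K * ‖F s‖ + 0 := by
              rw [add_zero]
              exact mul_le_mul_of_nonneg_right (hK _ hmem) (norm_nonneg _)
    have h := key τ ⟨le_of_lt hτpos, le_refl τ⟩
    rw [gronwallBound_ε0_δ0] at h
    have : f 0 = 0 := by
      have h0 : F τ = f 0 := by simp [hF]
      have := le_antisymm h (norm_nonneg _)
      rw [h0] at this; exact norm_eq_zero.mp this
    exact hf0.ne' this
  by_contra hle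
  push_neg at hle
  have hlt : f T < 0 := lt_of_le_of_ne hle (hne T ⟨hT, le_refl T⟩)
  have h0 : (0:ℝ) ∈ Set.Icc (f T) (f 0) := ⟨le_of_lt hlt, le_of_lt hf0⟩
  obtain ⟨τ, hτ, hfτ⟩ := intermediate_value_Icc' hT (hfc.mono Set.Icc_subset_Ici_self) h0
  exact hne τ hτ hfτ

/-- Pre-LN symmetric system: asymptotics of cosine similarity and magnitude. -/
theorem preLN_symmetric_system_asymptotics (n : ℕ) (hn : 2 ≤ n) (β : ℝ) (hβ : 0 < β)
    (r₀ : ℝ) (hr₀ : 0 < r₀) (γ r : ℝ → ℝ)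
    (hrpos : ∀ t, 0 ≤ t → 0 < r t)
    (hγ0 : γ 0 = 0) (hr0 : r 0 = r₀)
    (hrdyn : ∀ t, 0 ≤ t → HasDerivAt r
      (((n - 1) * Real.exp (β * γ t) * γ t + Real.exp β) /
        ((n - 1) * Real.exp (β * γ t) + Real.exp β)) t)
    (hγdyn : ∀ t, 0 ≤ t → HasDerivAt γ
      (2 * Real.exp (β * γ t) * (1 - γ t) * ((n - 1) * γ t + 1) /
        (r t * ((n - 1) * Real.exp (β * γ t) + Real.exp β))) t) :
    MonotoneOn γ (Set.Ici 0) ∧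
    (∀ t, 0 ≤ t → 0 ≤ γ t ∧ γ t < 1) ∧
    Tendsto γ atTop (nhds 1) ∧
    Tendsto (fun t => r t / t) atTop (nhds 1) := by
  have hN : (1:ℝ) ≤ (n:ℝ) - 1 := by
    have : (2:ℝ) ≤ (n:ℝ) := by exact_mod_cast hn
    linarith
  have hD : ∀ t, 0 < ((n:ℝ) - 1) * Real.exp (β * γ t) + Real.exp β := by
    intro t
    have := Real.exp_pos (β * γ t)
    have := Real.exp_pos β
    nlinarith
  have hrD : ∀ t, 0 ≤ t → 0 < r t * (((n:ℝ) - 1) * Real.exp (β * γ t) + Real.exp β) :=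
    fun t ht => mul_pos (hrpos t ht) (hD t)
  -- continuity
  have hγc : ContinuousOn γ (Set.Ici 0) :=
    fun x hx => (hγdyn x hx).continuousAt.continuousWithinAt
  have hrc : ContinuousOn r (Set.Ici 0) :=
    fun x hx => (hrdyn x hx).continuousAt.continuousWithinAt
  have hec : ContinuousOn (fun t => Real.exp (β * γ t)) (Set.Ici 0) :=
    Real.continuous_exp.comp_continuousOn (continuousOn_const.mul hγc)
  have hDc : ContinuousOn (fun t => ((n:ℝ) - 1) * Real.exp (β * γ t) + Real.exp β)
      (Set.Ici 0) := (continuousOn_const.mul hec).add continuousOn_const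
  have hrDc : ContinuousOn (fun t => r t * (((n:ℝ) - 1) * Real.exp (β * γ t) + Real.exp β))
      (Set.Ici 0) := hrc.mul hDc
  -- barrier at 1 : 1 - γ t > 0
  have h1 : ∀ t, 0 ≤ t → 0 < 1 - γ t := by
    apply pos_of_linode (fun t => 1 - γ t)
      (fun t => -(2 * Real.exp (β * γ t) * (((n:ℝ) - 1) * γ t + 1)) /
        (r t * (((n:ℝ) - 1) * Real.exp (β * γ t) + Real.exp β)))
    · simp [hγ0]
    · intro t ht
      have h := (hγdyn t ht).const_sub 1
      refine h.congr_deriv ?_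
      ring
    · exact ContinuousOn.div ((continuousOn_const.mul hec).mul
        ((continuousOn_const.mul hγc).add continuousOn_const)).neg hrDc
        (fun x hx => (hrD x hx).ne')
  -- barrier at -1/(n-1) : (n-1) γ t + 1 > 0
  have h2 : ∀ t, 0 ≤ t → 0 < ((n:ℝ) - 1) * γ t + 1 := by
    apply pos_of_linode (fun t => ((n:ℝ) - 1) * γ t + 1)
      (fun t => 2 * ((n:ℝ) - 1) * Real.exp (β * γ t) * (1 - γ t) /
        (r t * (((n:ℝ) - 1) * Real.exp (β * γ t) + Real.exp β)))
    · simp [hγ0]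
    · intro t ht
      have h := ((hγdyn t ht).const_mul ((n:ℝ) - 1)).add_const 1
      refine h.congr_deriv ?_
      ring
    · exact ContinuousOn.div (((continuousOn_const.mul hec)).mul
        (continuousOn_const.sub hγc)) hrDc (fun x hx => (hrD x hx).ne')
  -- γ' > 0
  have hγ' : ∀ t, 0 ≤ t →
      0 < 2 * Real.exp (β * γ t) * (1 - γ t) * (((n:ℝ) - 1) * γ t + 1) /
        (r t * (((n:ℝ) - 1) * Real.exp (β * γ t) + Real.exp β)) := by
    intro t ht
    exact div_pos (mul_pos (mul_pos (by positivity) (h1 t ht)) (h2 t ht)) (hrD t ht)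
  -- monotonicity
  have hmono : MonotoneOn γ (Set.Ici 0) :=
    monoOn_Ici_of_deriv 0 γ _ (fun t ht => hγdyn t ht) (fun t ht => le_of_lt (hγ' t ht))
  have hγnn : ∀ t, 0 ≤ t → 0 ≤ γ t := by
    intro t ht
    have := hmono (Set.self_mem_Ici) ht ht
    rwa [hγ0] at this
  -- r' ≤ 1 and γ t ≤ r' t
  have hr'le : ∀ t, 0 ≤ t →
      (((n:ℝ) - 1) * Real.exp (β * γ t) * γ t + Real.exp β) /
        (((n:ℝ) - 1) * Real.exp (β * γ t) + Real.exp β) ≤ 1 := by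
    intro t ht
    rw [div_le_one (hD t)]
    nlinarith [mul_nonneg (mul_nonneg (show (0:ℝ) ≤ (n:ℝ) - 1 by linarith)
      (Real.exp_pos (β * γ t)).le) (h1 t ht).le]
  have hγler' : ∀ t, 0 ≤ t →
      γ t ≤ (((n:ℝ) - 1) * Real.exp (β * γ t) * γ t + Real.exp β) /
        (((n:ℝ) - 1) * Real.exp (β * γ t) + Real.exp β) := by
    intro t ht
    rw [le_div_iff₀ (hD t)]
    nlinarith [mul_nonneg (Real.exp_pos β).le (h1 t ht).le]
  -- r t ≤ r₀ + t
  have hrle : ∀ t, 0 ≤ t → r t ≤ r₀ + t := by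
    intro t ht
    have hm : MonotoneOn (fun t => r₀ + t - r t) (Set.Ici 0) := by
      apply monoOn_Ici_of_deriv 0 _ (fun t =>
        1 - (((n:ℝ) - 1) * Real.exp (β * γ t) * γ t + Real.exp β) /
          (((n:ℝ) - 1) * Real.exp (β * γ t) + Real.exp β))
      · intro t ht
        exact ((hasDerivAt_id' t).const_add r₀).sub (hrdyn t ht)
      · intro t ht
        have := hr'le t ht
        linarith
    have := hm Set.self_mem_Ici ht ht
    simp [hr0] at this
    linarith
  -- limit of γ
  set G : ℝ → ℝ := fun t => γ (max t 0) with hG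
  have hGmono : Monotone G := fun s t hst =>
    hmono (le_max_right s 0) (le_max_right t 0) (max_le_max hst le_rfl)
  have hGbdd : BddAbove (Set.range G) := by
    refine ⟨1, ?_⟩
    rintro x ⟨t, rfl⟩
    exact le_of_lt (by linarith [h1 (max t 0) (le_max_right t 0)])
  set L : ℝ := ⨆ t, G t with hLdef
  have hGL : Tendsto G atTop (nhds L) := tendsto_atTop_ciSup hGmono hGbdd
  have hγL : Tendsto γ atTop (nhds L) := by
    apply hGL.congr'
    filter_upwards [eventually_ge_atTop (0:ℝ)] with t ht
    simp [hG, max_eq_left ht]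
  have hγleL : ∀ t, 0 ≤ t → γ t ≤ L := by
    intro t ht
    have : G t ≤ L := le_ciSup hGbdd t
    simpa [hG, max_eq_left ht] using this
  have hL1 : L ≤ 1 := by
    apply ciSup_le
    intro t
    exact le_of_lt (by linarith [h1 (max t 0) (le_max_right t 0)])
  have hLeq : L = 1 := by
    by_contra hne
    have hLlt : L < 1 := lt_of_le_of_ne hL1 hne
    set c : ℝ := 2 * (1 - L) / ((n:ℝ) * Real.exp β) with hc
    have hcpos : 0 < c := by
      apply div_pos (by linarith)
      exact mul_pos (by linarith : (0:ℝ) < (n:ℝ)) (Real.exp_pos β)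
    -- derivative lower bound
    have hbound : ∀ t, 0 ≤ t → c / (r₀ + t) ≤
        2 * Real.exp (β * γ t) * (1 - γ t) * (((n:ℝ) - 1) * γ t + 1) /
          (r t * (((n:ℝ) - 1) * Real.exp (β * γ t) + Real.exp β)) := by
      intro t ht
      rw [hc, div_div]
      apply div_le_div₀ (mul_pos (mul_pos (by positivity) (h1 t ht)) (h2 t ht)).le
      · have he1 : (1:ℝ) ≤ Real.exp (β * γ t) :=
          Real.one_le_exp (mul_nonneg hβ.le (hγnn t ht))
        nlinarith [mul_nonneg (mul_nonneg (Real.exp_pos (β * γ t)).le (h1 t ht).le)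
          (mul_nonneg (show (0:ℝ) ≤ (n:ℝ) - 1 by linarith) (hγnn t ht)),
          mul_nonneg (sub_nonneg.mpr he1) (h1 t ht).le, hγleL t ht]
      · exact hrD t ht
      · have heb : Real.exp (β * γ t) ≤ Real.exp β := by
          apply Real.exp_le_exp.mpr
          nlinarith [h1 t ht]
        have h1' : r t ≤ r₀ + t := hrle t ht
        have h2' : ((n:ℝ) - 1) * Real.exp (β * γ t) + Real.exp β ≤ (n:ℝ) * Real.exp β := by
          nlinarith
        have hrt := hrpos t ht
        have hDt := hD t
        nlinarith [mul_le_mul h1' h2' hDt.le (by linarith : (0:ℝ) ≤ r₀ + t)]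
    -- γ grows like c * log
    have hψ : ∀ t, 0 ≤ t → c * (Real.log (r₀ + t) - Real.log r₀) ≤ γ t := by
      intro t ht
      have hm : MonotoneOn (fun t => γ t - c * Real.log (r₀ + t)) (Set.Ici 0) := by
        apply monoOn_Ici_of_deriv 0 _ (fun t =>
          2 * Real.exp (β * γ t) * (1 - γ t) * (((n:ℝ) - 1) * γ t + 1) /
            (r t * (((n:ℝ) - 1) * Real.exp (β * γ t) + Real.exp β)) - c * (r₀ + t)⁻¹)
        · intro t ht
          have hlog : HasDerivAt (fun t : ℝ => Real.log (r₀ + t)) ((r₀ + t)⁻¹) t := by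
            have h0 : HasDerivAt (fun t : ℝ => r₀ + t) 1 t := (hasDerivAt_id t).const_add r₀
            have := (Real.hasDerivAt_log ((show (0:ℝ) < r₀ + t from by have ht0 : (0:ℝ) ≤ t := ht; linarith).ne')).comp t h0
            rw [mul_one] at this; exact this
          exact (hγdyn t ht).sub (hlog.const_mul c)
        · intro t ht
          have := hbound t ht
          rw [div_eq_mul_inv] at this
          linarith
      have := hm Set.self_mem_Ici ht ht
      simp only [hγ0, add_zero, zero_sub] at this
      linarith
    -- contradiction: γ exceeds 1
    set t₁ : ℝ := Real.exp (2 / c + Real.log r₀) with ht₁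
    have ht₁pos : 0 < t₁ := Real.exp_pos _
    have hlog₁ : 2 / c + Real.log r₀ ≤ Real.log (r₀ + t₁) := by
      rw [← Real.log_exp (2 / c + Real.log r₀)]
      apply Real.log_le_log (Real.exp_pos _)
      rw [← ht₁]; linarith
    have := hψ t₁ ht₁pos.le
    have h2c : 2 ≤ γ t₁ := by
      have : c * (2 / c) ≤ γ t₁ := by
        calc c * (2 / c) ≤ c * (Real.log (r₀ + t₁) - Real.log r₀) := by
              apply mul_le_mul_of_nonneg_left _ hcpos.le
              linarith
          _ ≤ γ t₁ := this
      rwa [mul_div_cancel₀ _ hcpos.ne'] at this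
    linarith [h1 t₁ ht₁pos.le]
  rw [hLeq] at hγL
  refine ⟨hmono, fun t ht => ⟨hγnn t ht, by linarith [h1 t ht]⟩, hγL, ?_⟩
  rw [Metric.tendsto_atTop]
  intro ε hε
  have hev : ∀ᶠ t in atTop, 0 ≤ t ∧ 1 - ε / 2 < γ t := by
    filter_upwards [eventually_ge_atTop (0:ℝ),
      hγL.eventually (lt_mem_nhds (show 1 - ε / 2 < 1 by linarith))] with t h1t h2t
    exact ⟨h1t, h2t⟩
  obtain ⟨T, hT⟩ := eventually_atTop.mp hev
  set T0 : ℝ := max T 0 with hT0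
  have hT0nn : (0:ℝ) ≤ T0 := le_max_right T 0
  have hTγ : ∀ t, T0 ≤ t → 1 - ε / 2 < γ t := fun t ht =>
    (hT t (le_trans (le_max_left T 0) ht)).2
  have hm : MonotoneOn (fun t => r t - (1 - ε / 2) * t) (Set.Ici T0) := by
    apply monoOn_Ici_of_deriv T0 _ (fun t =>
      (((n:ℝ) - 1) * Real.exp (β * γ t) * γ t + Real.exp β) /
        (((n:ℝ) - 1) * Real.exp (β * γ t) + Real.exp β) - (1 - ε / 2))
    · intro t ht
      have ht' : (0:ℝ) ≤ t := le_trans hT0nn ht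
      have := (hrdyn t ht').sub ((hasDerivAt_id t).const_mul (1 - ε / 2))
      rw [mul_one] at this; exact this
    · intro t ht
      have ht' : (0:ℝ) ≤ t := le_trans hT0nn ht
      have := hγler' t ht'
      have := hTγ t ht
      linarith
  set Cv : ℝ := r T0 - (1 - ε / 2) * T0 with hCv
  have hlow : ∀ t, T0 ≤ t → Cv ≤ r t - (1 - ε / 2) * t := by
    intro t ht
    exact hm Set.self_mem_Ici ht ht
  clear_value Cv T0
  refine ⟨max (max T0 1) (max (2 * r₀ / ε) (2 * |Cv| / ε + 1)), fun t ht => ?_⟩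
  have ht1 : (1:ℝ) ≤ t := le_trans (le_trans (le_max_right T0 1) (le_max_left _ _)) ht
  have htpos : (0:ℝ) < t := by linarith
  have htT0 : T0 ≤ t := le_trans (le_trans (le_max_left T0 1) (le_max_left _ _)) ht
  have htr : 2 * r₀ / ε ≤ t := le_trans (le_trans (le_max_left _ _) (le_max_right _ _)) ht
  have htC : 2 * |Cv| / ε + 1 ≤ t := le_trans (le_trans (le_max_right _ _) (le_max_right _ _)) ht
  have hεr : 2 * r₀ ≤ ε * t := by
    rw [div_le_iff₀ hε] at htr; linarith
  have hεC : 2 * |Cv| < ε * t := by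
    have h' : 2 * |Cv| / ε ≤ t - 1 := by linarith
    rw [div_le_iff₀ hε] at h'
    nlinarith
  rw [Real.dist_eq, abs_sub_lt_iff]
  constructor
  · rw [div_sub_one htpos.ne', div_lt_iff₀ htpos]
    have := hrle t (by linarith)
    linarith
  · rw [sub_div' htpos.ne', div_lt_iff₀ htpos]
    have h5 := hlow t htT0
    have h6 := neg_abs_le Cv
    linarith
end

section
/- Let n ≥ 2, β > 0 and r₀ > 0, and let (γ, r) : [0,∞) → ℝ × (0,∞) be a C¹ solution of the Pre-LN symmetric system ṙ(t) = ((n−1) e^{βγ(t)} γ(t) + e^{β}) / ((n−1) e^{βγ(t)} + e^{β}) and γ̇(t) = 2 e^{βγ(t)} (1 − γ(t)) ((n−1)γ(t) + 1) / ( r(t) ((n−1) e^{βγ(t)} + e^{β}) ), with γ(0) = 0 and r(0) = r₀. Then for every t ≥ 0 one has r(t) ≤ r₀ + t, and 1 − γ(t) ≤ exp( − (2/(n e^{β})) ∫₀^t ds / r(s) ). -/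
open Filter Real intervalIntegral
open Set
set_option maxHeartbeats 1000000

/-- Pre-LN symmetric system: linear bound on the magnitude and Grönwall-type
bound on the cosine similarity. -/
theorem preLN_symmetric_system_gronwall (n : ℕ) (hn : 2 ≤ n) (β : ℝ) (hβ : 0 < β)
    (r₀ : ℝ) (hr₀ : 0 < r₀) (γ r : ℝ → ℝ)
    (hrpos : ∀ t, 0 ≤ t → 0 < r t)
    (hγ0 : γ 0 = 0) (hr0 : r 0 = r₀)
    (hrdyn : ∀ t, 0 ≤ t → HasDerivAt r
      (((n - 1) * Real.exp (β * γ t) * γ t + Real.exp β) /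
        ((n - 1) * Real.exp (β * γ t) + Real.exp β)) t)
    (hγdyn : ∀ t, 0 ≤ t → HasDerivAt γ
      (2 * Real.exp (β * γ t) * (1 - γ t) * ((n - 1) * γ t + 1) /
        (r t * ((n - 1) * Real.exp (β * γ t) + Real.exp β))) t) :
    ∀ t, 0 ≤ t →
      r t ≤ r₀ + t ∧
      1 - γ t ≤ Real.exp (-(2 / (n * Real.exp β)) * ∫ s in (0:ℝ)..t, (r s)⁻¹) := by
  have hn1 : (1:ℝ) ≤ (n:ℝ) - 1 := by
    have : (2:ℝ) ≤ (n:ℝ) := by exact_mod_cast hn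
    linarith
  have hD : ∀ u : ℝ, 0 < ((n:ℝ) - 1) * Real.exp (β * γ u) + Real.exp β := fun u => by
    nlinarith [Real.exp_pos (β * γ u), Real.exp_pos β]
  -- γ ≤ 1
  have hγle1 : ∀ t, 0 ≤ t → γ t ≤ 1 := by
    intro t₂ ht₂
    by_contra hcon; push_neg at hcon
    set S : Set ℝ := Icc 0 t₂ ∩ γ ⁻¹' (Iic 1) with hSdef
    have hSne : S.Nonempty := ⟨0, ⟨le_refl 0, ht₂⟩, by simp [hγ0]⟩
    have hγcont : ContinuousOn γ (Icc 0 t₂) := fun u hu =>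
      ((hγdyn u hu.1).continuousAt).continuousWithinAt
    have hScl : IsClosed S :=
      hγcont.preimage_isClosed_of_isClosed isClosed_Icc isClosed_Iic
    have hSbdd : BddAbove S := (bddAbove_Icc).mono inter_subset_left
    set s := sSup S with hs
    have hsS : s ∈ S := hScl.csSup_mem hSne hSbdd
    have hs0 : 0 ≤ s := hsS.1.1
    have hγs : γ s ≤ 1 := hsS.2
    have hslt : s < t₂ := lt_of_le_of_ne hsS.1.2 (by intro h; rw [h] at hγs; linarith)
    have hgt : ∀ u, u ∈ Ioc s t₂ → 1 < γ u := by
      intro u hu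
      by_contra h; push_neg at h
      have huS : u ∈ S := ⟨⟨hs0.trans hu.1.le, hu.2⟩, h⟩
      exact absurd (le_csSup hSbdd huS) (not_le.2 hu.1)
    have anti : StrictAntiOn γ (Icc s t₂) := by
      apply strictAntiOn_of_deriv_neg (convex_Icc s t₂)
      · intro u hu; exact ((hγdyn u (hs0.trans hu.1)).continuousAt).continuousWithinAt
      · intro u hu
        rw [interior_Icc] at hu
        have hu0 : 0 ≤ u := hs0.trans hu.1.le
        have h1 : 1 < γ u := hgt u ⟨hu.1, hu.2.le⟩
        rw [(hγdyn u hu0).deriv]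
        apply div_neg_of_neg_of_pos
        · have hfac : (0:ℝ) < ((n:ℝ) - 1) * γ u + 1 := by nlinarith
          have hneg1 : 2 * Real.exp (β * γ u) * (1 - γ u) < 0 :=
            mul_neg_of_pos_of_neg (by positivity) (by linarith)
          exact mul_neg_of_neg_of_pos hneg1 hfac
        · exact mul_pos (hrpos u hu0) (hD u)
    have := anti (left_mem_Icc.2 hslt.le) (right_mem_Icc.2 hslt.le) hslt
    linarith
  -- γ ≥ 0
  have hγge0 : ∀ t, 0 ≤ t → 0 ≤ γ t := by
    intro t₂ ht₂
    by_contra hcon; push_neg at hcon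
    set S : Set ℝ := Icc 0 t₂ ∩ γ ⁻¹' (Ici 0) with hSdef
    have hSne : S.Nonempty := ⟨0, ⟨le_refl 0, ht₂⟩, by simp [hγ0]⟩
    have hγcont : ContinuousOn γ (Icc 0 t₂) := fun u hu =>
      ((hγdyn u hu.1).continuousAt).continuousWithinAt
    have hScl : IsClosed S :=
      hγcont.preimage_isClosed_of_isClosed isClosed_Icc isClosed_Ici
    have hSbdd : BddAbove S := (bddAbove_Icc).mono inter_subset_left
    set s := sSup S with hs
    have hsS : s ∈ S := hScl.csSup_mem hSne hSbdd
    have hs0 : 0 ≤ s := hsS.1.1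
    have hγs : 0 ≤ γ s := hsS.2
    have hslt : s < t₂ := lt_of_le_of_ne hsS.1.2 (by intro h; rw [h] at hγs; linarith)
    have hneg : ∀ u, u ∈ Ioc s t₂ → γ u < 0 := by
      intro u hu
      by_contra h; push_neg at h
      have huS : u ∈ S := ⟨⟨hs0.trans hu.1.le, hu.2⟩, h⟩
      exact absurd (le_csSup hSbdd huS) (not_le.2 hu.1)
    set c : ℝ := min (1 / (2 * ((n:ℝ) - 1))) (-γ t₂) with hcdef
    have hcpos : 0 < c := lt_min (by positivity) (by linarith)
    have hc2 : ((n:ℝ) - 1) * c ≤ 1 / 2 := by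
      have h1 : c ≤ 1 / (2 * ((n:ℝ) - 1)) := min_le_left _ _
      have h2 : ((n:ℝ) - 1) * c ≤ ((n:ℝ) - 1) * (1 / (2 * ((n:ℝ) - 1))) :=
        mul_le_mul_of_nonneg_left h1 (by linarith)
      have hne : ((n:ℝ) - 1) ≠ 0 := by linarith
      have h3 : ((n:ℝ) - 1) * (1 / (2 * ((n:ℝ) - 1))) = 1 / 2 := by
        field_simp
      linarith
    set T : Set ℝ := Icc s t₂ ∩ γ ⁻¹' (Iic (-c)) with hTdef
    have hTne : T.Nonempty := ⟨t₂, ⟨hslt.le, le_refl _⟩, by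
      have : c ≤ -γ t₂ := min_le_right _ _
      simp only [Set.mem_preimage, Set.mem_Iic]; linarith⟩
    have hγcont' : ContinuousOn γ (Icc s t₂) := fun u hu =>
      ((hγdyn u (hs0.trans hu.1)).continuousAt).continuousWithinAt
    have hTcl : IsClosed T :=
      hγcont'.preimage_isClosed_of_isClosed isClosed_Icc isClosed_Iic
    have hTbdd : BddBelow T := (bddBelow_Icc).mono inter_subset_left
    set u := sInf T with hu
    have huT : u ∈ T := hTcl.csInf_mem hTne hTbdd
    have hγu : γ u ≤ -c := huT.2
    have hsu : s < u := lt_of_le_of_ne huT.1.1 (by intro h; rw [← h] at hγu; linarith)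
    have hmid : ∀ v, v ∈ Ico s u → -c < γ v := by
      intro v hv
      by_contra h; push_neg at h
      have hvT : v ∈ T := ⟨⟨hv.1, hv.2.le.trans huT.1.2⟩, h⟩
      exact absurd (csInf_le hTbdd hvT) (not_le.2 hv.2)
    have mono : StrictMonoOn γ (Icc s u) := by
      apply strictMonoOn_of_deriv_pos (convex_Icc s u)
      · intro w hw; exact ((hγdyn w (hs0.trans hw.1)).continuousAt).continuousWithinAt
      · intro w hw
        rw [interior_Icc] at hw
        have hw0 : 0 ≤ w := hs0.trans hw.1.le
        have hwneg : γ w < 0 := hneg w ⟨hw.1, hw.2.le.trans huT.1.2⟩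
        have hwgt : -c < γ w := hmid w ⟨hw.1.le, hw.2⟩
        have hfac : 0 < ((n:ℝ) - 1) * γ w + 1 := by
          have := mul_pos (show (0:ℝ) < (n:ℝ) - 1 by linarith)
            (show 0 < γ w + c by linarith)
          nlinarith
        rw [(hγdyn w hw0).deriv]
        apply div_pos
        · have h1 : (0:ℝ) < 2 * Real.exp (β * γ w) * (1 - γ w) :=
            mul_pos (mul_pos two_pos (Real.exp_pos _)) (by linarith)
          exact mul_pos h1 hfac
        · exact mul_pos (hrpos w hw0) (hD w)
    have := mono (left_mem_Icc.2 hsu.le) (right_mem_Icc.2 hsu.le) hsu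
    linarith
  -- r t ≤ r₀ + t
  have hrle : ∀ t, 0 ≤ t → r t ≤ r₀ + t := by
    intro t ht
    have mono : MonotoneOn (fun x => r₀ + x - r x) (Icc 0 t) := by
      apply monotoneOn_of_deriv_nonneg (convex_Icc 0 t)
      · intro x hx
        exact ((continuousAt_const.add continuousAt_id).sub
          (hrdyn x hx.1).continuousAt).continuousWithinAt
      · intro x hx
        rw [interior_Icc] at hx
        exact (((hasDerivAt_id x).const_add r₀).sub
          (hrdyn x hx.1.le)).differentiableAt.differentiableWithinAt
      · intro x hx
        rw [interior_Icc] at hx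
        have hx0 : 0 ≤ x := hx.1.le
        have hg : HasDerivAt (fun x => r₀ + x - r x)
            (1 - (((n:ℝ) - 1) * Real.exp (β * γ x) * γ x + Real.exp β) /
              (((n:ℝ) - 1) * Real.exp (β * γ x) + Real.exp β)) x :=
          ((hasDerivAt_id x).const_add r₀).sub (hrdyn x hx0)
        rw [hg.deriv]
        have hle : (((n:ℝ) - 1) * Real.exp (β * γ x) * γ x + Real.exp β) /
            (((n:ℝ) - 1) * Real.exp (β * γ x) + Real.exp β) ≤ 1 := by
          rw [div_le_one (hD x)]
          nlinarith [mul_nonneg (mul_nonneg (show (0:ℝ) ≤ (n:ℝ) - 1 by linarith)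
            (Real.exp_pos (β * γ x)).le) (show 0 ≤ 1 - γ x by linarith [hγle1 x hx0])]
        linarith
    have h := mono (left_mem_Icc.2 ht) (right_mem_Icc.2 ht) ht
    simp only [hr0] at h
    linarith
  -- main
  intro t ht
  refine ⟨hrle t ht, ?_⟩
  set K : ℝ := 2 / ((n:ℝ) * Real.exp β) with hKdef
  have hrcontOn : ∀ x ∈ Ici (0:ℝ), ContinuousAt (fun s => (r s)⁻¹) x := by
    intro x hx
    exact ((hrdyn x hx).continuousAt).inv₀ (ne_of_gt (hrpos x hx))
  have hintOn : ContinuousOn (fun s => (r s)⁻¹) (Icc 0 t) := fun x hx =>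
    (hrcontOn x hx.1).continuousWithinAt
  have hInt : IntervalIntegrable (fun s => (r s)⁻¹) MeasureTheory.volume 0 t :=
    hintOn.intervalIntegrable_of_Icc ht
  set I : ℝ → ℝ := fun x => ∫ s in (0:ℝ)..x, (r s)⁻¹ with hIdef
  have hIcont : ContinuousOn I (Icc 0 t) := by
    have := intervalIntegral.continuousOn_primitive_interval' hInt
      (by rw [Set.uIcc_of_le ht]; exact Set.left_mem_Icc.2 ht)
    rwa [Set.uIcc_of_le ht] at this
  have hIderiv : ∀ x ∈ Ioo (0:ℝ) t, HasDerivAt I ((r x)⁻¹) x := by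
    intro x hx
    apply intervalIntegral.integral_hasDerivAt_right
    · apply hInt.mono_set
      rw [Set.uIcc_of_le ht, Set.uIcc_of_le hx.1.le]
      exact Set.Icc_subset_Icc le_rfl hx.2.le
    · exact ContinuousOn.stronglyMeasurableAtFilter isOpen_Ioi
        (fun v hv => (hrcontOn v (le_of_lt hv)).continuousWithinAt) x hx.1
    · exact hrcontOn x hx.1.le
  set F : ℝ → ℝ := fun x => (1 - γ x) * Real.exp (K * I x) with hFdef
  have hFderiv : ∀ x ∈ Ioo (0:ℝ) t, HasDerivAt F
      (-(2 * Real.exp (β * γ x) * (1 - γ x) * ((n - 1) * γ x + 1) /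
        (r x * ((n - 1) * Real.exp (β * γ x) + Real.exp β))) * Real.exp (K * I x) +
        (1 - γ x) * (Real.exp (K * I x) * (K * (r x)⁻¹))) x := by
    intro x hx
    exact ((hγdyn x hx.1.le).const_sub 1).mul (((hIderiv x hx).const_mul K).exp)
  have hFanti : AntitoneOn F (Icc 0 t) := by
    apply antitoneOn_of_deriv_nonpos (convex_Icc 0 t)
    · exact (continuousOn_const.sub (fun x hx =>
        ((hγdyn x hx.1).continuousAt).continuousWithinAt)).mul
        (Real.continuous_exp.comp_continuousOn (continuousOn_const.mul hIcont))
    · intro x hx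
      rw [interior_Icc] at hx
      exact (hFderiv x hx).differentiableAt.differentiableWithinAt
    · intro x hx
      rw [interior_Icc] at hx
      rw [(hFderiv x hx).deriv]
      have hx0 : 0 ≤ x := hx.1.le
      have hg0 : 0 ≤ γ x := hγge0 x hx0
      have hg1 : γ x ≤ 1 := hγle1 x hx0
      have hrp : 0 < r x := hrpos x hx0
      have hDp := hD x
      have hEg1 : 1 ≤ Real.exp (β * γ x) := Real.one_le_exp (mul_nonneg hβ.le hg0)
      have hEgle : Real.exp (β * γ x) ≤ Real.exp β :=
        Real.exp_le_exp.2 (by nlinarith)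
      have hnE : 0 < (n:ℝ) * Real.exp β := by positivity
      have key : (1 - γ x) * (K * (r x)⁻¹) ≤
          2 * Real.exp (β * γ x) * (1 - γ x) * (((n:ℝ) - 1) * γ x + 1) /
            (r x * (((n:ℝ) - 1) * Real.exp (β * γ x) + Real.exp β)) := by
        rw [show (1 - γ x) * (K * (r x)⁻¹) =
            (2 * (1 - γ x)) / (((n:ℝ) * Real.exp β) * r x) by
          rw [hKdef]; field_simp]
        rw [div_le_div_iff₀ (by positivity) (mul_pos hrp hDp)]
        have hfac0 : (1:ℝ) ≤ ((n:ℝ) - 1) * γ x + 1 := by nlinarith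
        have hfac1 : (1:ℝ) ≤ Real.exp (β * γ x) * (((n:ℝ) - 1) * γ x + 1) := by
          nlinarith [mul_le_mul hEg1 hfac0 zero_le_one (zero_le_one.trans hEg1)]
        have hDle : ((n:ℝ) - 1) * Real.exp (β * γ x) + Real.exp β ≤ (n:ℝ) * Real.exp β := by
          nlinarith
        have hA : (0:ℝ) ≤ 2 * (1 - γ x) * r x :=
          mul_nonneg (by linarith) hrp.le
        have h1 : 2 * (1 - γ x) * r x * (((n:ℝ) - 1) * Real.exp (β * γ x) + Real.exp β) ≤
            2 * (1 - γ x) * r x * ((n:ℝ) * Real.exp β) :=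
          mul_le_mul_of_nonneg_left hDle hA
        have h2 : 2 * (1 - γ x) * r x * ((n:ℝ) * Real.exp β) * 1 ≤
            2 * (1 - γ x) * r x * ((n:ℝ) * Real.exp β) *
              (Real.exp (β * γ x) * (((n:ℝ) - 1) * γ x + 1)) :=
          mul_le_mul_of_nonneg_left hfac1 (mul_nonneg hA hnE.le)
        linarith [h1, h2]
      have hE := Real.exp_pos (K * I x)
      nlinarith [mul_nonneg hE.le (sub_nonneg.2 key)]
  have hF := hFanti (Set.left_mem_Icc.2 ht) (Set.right_mem_Icc.2 ht) ht
  have hF0 : F 0 = 1 := by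
    simp [hFdef, hIdef, hγ0, intervalIntegral.integral_same]
  rw [hF0] at hF
  have hE := Real.exp_pos (K * I t)
  rw [show -(2 / ((n:ℝ) * Real.exp β)) * ∫ s in (0:ℝ)..t, (r s)⁻¹ = -(K * I t) by
    rw [hKdef]; ring]
  rw [Real.exp_neg, inv_eq_one_div, le_div_iff₀ hE]
  exact hF
end

section
/- Let n ≥ 2 and β > 0, and let γ : [0,∞) → ℝ be a C¹ solution of the LN-Scaling symmetric cosine-similarity ODE γ̇(t) = 2 e^{βγ(t)} (1 − γ(t)) ((n−1)γ(t) + 1) / ( √(t+1) ((n−1) e^{βγ(t)} + e^{β}) ) with γ(0) = 0. Then γ is increasing with 0 ≤ γ(t) < 1, γ(t) → 1 as t → ∞, and lim_{t→∞} log(1 − γ(t)) / √t = −4. -/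
open Filter Real

lemma gronwall_zero {v v' : ℝ → ℝ} {K a b : ℝ} (hab : a ≤ b)
    (hd : ∀ t ∈ Set.Icc a b, HasDerivAt v (v' t) t)
    (hb : ∀ t ∈ Set.Icc a b, |v' t| ≤ K * |v t|)
    (hvb : v b = 0) : v a = 0 := by
  set w : ℝ → ℝ := fun s => v (a + b - s) with hw
  have hmem : ∀ s ∈ Set.Icc a b, a + b - s ∈ Set.Icc a b := by
    intro s hs; simp at hs ⊢; constructor <;> linarith [hs.1, hs.2]
  have hwd : ∀ s ∈ Set.Icc a b, HasDerivAt w (-(v' (a + b - s))) s := by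
    intro s hs
    have h1 : HasDerivAt (fun s : ℝ => a + b - s) (-1) s := by
      simpa using (hasDerivAt_id s).const_sub (a + b)
    have := (hd _ (hmem s hs)).comp s h1
    exact (by simpa [mul_comm] using this : HasDerivAt (v ∘ HSub.hSub (a + b)) (-(v' (a + b - s))) s)
  have hwc : ContinuousOn w (Set.Icc a b) := fun s hs =>
    ((hwd s hs).continuousAt).continuousWithinAt
  have key := norm_le_gronwallBound_of_norm_deriv_right_le (f := w)
    (f' := fun s => -(v' (a + b - s))) (δ := 0) (K := K) (ε := 0) (a := a) (b := b)
    hwc (fun s hs => ((hwd s (Set.mem_Icc_of_Ico hs)).hasDerivWithinAt))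
    (by simp [hw, hvb])
    (fun s hs => by
      have := hb _ (hmem s (Set.mem_Icc_of_Ico hs))
      simpa [Real.norm_eq_abs] using this)
  have h2 := key b (Set.right_mem_Icc.2 hab)
  rw [gronwallBound_ε0] at h2
  simp [hw, Real.norm_eq_abs] at h2
  exact h2

lemma mono_aux {f f' : ℝ → ℝ} {a : ℝ} (hd : ∀ t ∈ Set.Ici a, HasDerivAt f (f' t) t)
    (h0 : ∀ t ∈ Set.Ici a, 0 ≤ f' t) : MonotoneOn f (Set.Ici a) := by
  apply monotoneOn_of_deriv_nonneg (convex_Ici a)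
    (fun t ht => (hd t ht).continuousAt.continuousWithinAt)
  · intro t ht; rw [interior_Ici] at ht
    exact ((hd t (Set.mem_Ici.2 (le_of_lt ht))).differentiableAt).differentiableWithinAt
  · intro t ht; rw [interior_Ici] at ht
    rw [(hd t (Set.mem_Ici.2 ht.le)).deriv]; exact h0 t (Set.mem_Ici.2 ht.le)

lemma anti_aux {f f' : ℝ → ℝ} {a : ℝ} (hd : ∀ t ∈ Set.Ici a, HasDerivAt f (f' t) t)
    (h0 : ∀ t ∈ Set.Ici a, f' t ≤ 0) : AntitoneOn f (Set.Ici a) := by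
  apply antitoneOn_of_deriv_nonpos (convex_Ici a)
    (fun t ht => (hd t ht).continuousAt.continuousWithinAt)
  · intro t ht; rw [interior_Ici] at ht
    exact ((hd t (Set.mem_Ici.2 (le_of_lt ht))).differentiableAt).differentiableWithinAt
  · intro t ht; rw [interior_Ici] at ht
    rw [(hd t (Set.mem_Ici.2 ht.le)).deriv]; exact h0 t (Set.mem_Ici.2 ht.le)

lemma sqrtAtTop : Tendsto Real.sqrt atTop atTop := by
  rw [tendsto_atTop_atTop]
  intro b
  refine ⟨max (b^2) 0, fun a ha => ?_⟩
  calc b ≤ |b| := le_abs_self b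
    _ = Real.sqrt (b^2) := (Real.sqrt_sq_eq_abs b).symm
    _ ≤ Real.sqrt a := Real.sqrt_le_sqrt (le_trans (le_max_left _ _) ha)

lemma sqrt_ratio_tendsto :
    Tendsto (fun t : ℝ => Real.sqrt (t + 1) / Real.sqrt t) atTop (nhds 1) := by
  have h1 : Tendsto (fun t : ℝ => (t + 1) / t) atTop (nhds 1) := by
    have h2 : Tendsto (fun t : ℝ => 1 + 1 / t) atTop (nhds (1 + 0)) :=
      tendsto_const_nhds.add (tendsto_inv_atTop_zero.congr (fun t => (one_div t).symm))
    rw [add_zero] at h2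
    apply h2.congr'
    filter_upwards [eventually_gt_atTop 0] with t ht
    field_simp
  have h3 : Tendsto (fun t : ℝ => Real.sqrt ((t + 1) / t)) atTop (nhds 1) := by
    have := (Real.continuous_sqrt.tendsto 1).comp h1
    rw [Real.sqrt_one] at this; exact this
  apply h3.congr'
  filter_upwards [eventually_gt_atTop 0] with t ht
  rw [Real.sqrt_div (by linarith)]

lemma aux_lim (C K : ℝ) :
    Tendsto (fun t : ℝ => (C - K * Real.sqrt (t + 1)) / Real.sqrt t) atTop (nhds (-K)) := by
  have h0 : Tendsto (fun t : ℝ => C / Real.sqrt t) atTop (nhds 0) :=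
    Tendsto.div_atTop tendsto_const_nhds sqrtAtTop
  have h1 : Tendsto (fun t : ℝ => C / Real.sqrt t - K * (Real.sqrt (t + 1) / Real.sqrt t))
      atTop (nhds (0 - K * 1)) := h0.sub (tendsto_const_nhds.mul sqrt_ratio_tendsto)
  have h2 : (0 : ℝ) - K * 1 = -K := by ring
  rw [h2] at h1
  apply h1.congr
  intro t
  rw [sub_div, mul_div_assoc]

set_option maxHeartbeats 2000000 in
/-- LN-Scaling symmetric cosine-similarity ODE: asymptotics. -/
theorem lnScaling_symmetric_ODE_asymptotics (n : ℕ) (hn : 2 ≤ n) (β : ℝ) (hβ : 0 < β)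
    (γ : ℝ → ℝ) (hγ0 : γ 0 = 0)
    (hdyn : ∀ t, 0 ≤ t → HasDerivAt γ
      (2 * Real.exp (β * γ t) * (1 - γ t) * ((n - 1) * γ t + 1) /
        (Real.sqrt (t + 1) * ((n - 1) * Real.exp (β * γ t) + Real.exp β))) t) :
    MonotoneOn γ (Set.Ici 0) ∧
    (∀ t, 0 ≤ t → 0 ≤ γ t ∧ γ t < 1) ∧
    Tendsto γ atTop (nhds 1) ∧
    Tendsto (fun t => Real.log (1 - γ t) / Real.sqrt t) atTop (nhds (-4)) := by
  have hm : (1:ℝ) ≤ (n:ℝ) - 1 := by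
    have : (2:ℝ) ≤ (n:ℝ) := by exact_mod_cast hn
    linarith
  set F : ℝ → ℝ := fun t =>
    2 * Real.exp (β * γ t) * (1 - γ t) * (((n:ℝ) - 1) * γ t + 1) /
      (Real.sqrt (t + 1) * (((n:ℝ) - 1) * Real.exp (β * γ t) + Real.exp β)) with hFdef
  have hdyn' : ∀ t, 0 ≤ t → HasDerivAt γ (F t) t := hdyn
  have hcont : ContinuousOn γ (Set.Ici 0) := fun t ht =>
    (hdyn' t ht).continuousAt.continuousWithinAt
  have hsq1 : ∀ t : ℝ, 0 ≤ t → 1 ≤ Real.sqrt (t + 1) := by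
    intro t ht
    have h := Real.sqrt_le_sqrt (show (1:ℝ) ≤ t + 1 by linarith)
    rwa [Real.sqrt_one] at h
  have hsqpos : ∀ t : ℝ, 0 ≤ t → 0 < Real.sqrt (t + 1) := fun t ht =>
    lt_of_lt_of_le one_pos (hsq1 t ht)
  have hDpos : ∀ t : ℝ, 0 < ((n:ℝ) - 1) * Real.exp (β * γ t) + Real.exp β := fun t =>
    add_pos (mul_pos (by linarith) (Real.exp_pos _)) (Real.exp_pos β)
  -- a priori bound on |F|
  have hFbound : ∀ t, 0 ≤ t →
      |F t| ≤ 2 * |1 - γ t| * |((n:ℝ) - 1) * γ t + 1| := by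
    intro t ht
    rw [hFdef]
    have hE : 0 < Real.exp (β * γ t) := Real.exp_pos _
    have hden : Real.exp (β * γ t) ≤
        Real.sqrt (t + 1) * (((n:ℝ) - 1) * Real.exp (β * γ t) + Real.exp β) := by
      nlinarith [hsq1 t ht, Real.exp_pos β, hE, hDpos t]
    have hNabs : |2 * Real.exp (β * γ t) * (1 - γ t) * (((n:ℝ) - 1) * γ t + 1)| =
        2 * Real.exp (β * γ t) * |1 - γ t| * |((n:ℝ) - 1) * γ t + 1| := by
      rw [abs_mul, abs_mul, abs_mul]
      rw [abs_of_nonneg (by norm_num : (0:ℝ) ≤ 2), abs_of_pos hE]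
    calc |2 * Real.exp (β * γ t) * (1 - γ t) * (((n:ℝ) - 1) * γ t + 1) /
          (Real.sqrt (t + 1) * (((n:ℝ) - 1) * Real.exp (β * γ t) + Real.exp β))|
        = |2 * Real.exp (β * γ t) * (1 - γ t) * (((n:ℝ) - 1) * γ t + 1)| /
          (Real.sqrt (t + 1) * (((n:ℝ) - 1) * Real.exp (β * γ t) + Real.exp β)) := by
          rw [abs_div, abs_of_pos (mul_pos (hsqpos t ht) (hDpos t))]
      _ ≤ |2 * Real.exp (β * γ t) * (1 - γ t) * (((n:ℝ) - 1) * γ t + 1)| /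
          Real.exp (β * γ t) := by
          apply div_le_div_of_nonneg_left (abs_nonneg _) hE hden
      _ = 2 * |1 - γ t| * |((n:ℝ) - 1) * γ t + 1| := by
          rw [hNabs]; field_simp
  -- invariance: γ stays below 1
  have hup : ∀ t, 0 ≤ t → γ t < 1 := by
    by_contra hc
    push_neg at hc
    obtain ⟨t₀, ht₀, h1⟩ := hc
    have h01 : (1:ℝ) ∈ Set.Icc (γ 0) (γ t₀) := by rw [hγ0]; exact ⟨zero_le_one, h1⟩
    obtain ⟨t₁, ht₁mem, ht₁⟩ :=
      intermediate_value_Icc ht₀ (hcont.mono (Set.Icc_subset_Ici_self)) h01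
    have h0t₁ : (0:ℝ) ≤ t₁ := ht₁mem.1
    have hsub : Set.Icc (0:ℝ) t₁ ⊆ Set.Ici 0 := Set.Icc_subset_Ici_self
    obtain ⟨M, hM⟩ := (isCompact_Icc : IsCompact (Set.Icc (0:ℝ) t₁)).exists_bound_of_continuousOn
      (hcont.mono hsub)
    have hM0 : 0 ≤ M := le_trans (norm_nonneg _) (hM 0 ⟨le_refl 0, h0t₁⟩)
    have key := gronwall_zero (v := fun t => 1 - γ t) (v' := fun t => -(F t))
      (K := 2 * (((n:ℝ) - 1) * M + 1)) (a := 0) (b := t₁) h0t₁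
      (fun t ht => ((hdyn' t ht.1).const_sub 1))
      (fun t ht => by
        have hb1 := hFbound t ht.1
        have hMt : |γ t| ≤ M := by simpa [Real.norm_eq_abs] using hM t ht
        have hP : |((n:ℝ) - 1) * γ t + 1| ≤ ((n:ℝ) - 1) * M + 1 := by
          calc |((n:ℝ) - 1) * γ t + 1| ≤ |((n:ℝ) - 1) * γ t| + 1 := by
                simpa using abs_add_le (((n:ℝ) - 1) * γ t) 1
            _ = ((n:ℝ) - 1) * |γ t| + 1 := by
                rw [abs_mul, abs_of_nonneg (by linarith : (0:ℝ) ≤ (n:ℝ) - 1)]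
            _ ≤ ((n:ℝ) - 1) * M + 1 := by nlinarith
        have habs : |(-(F t))| = |F t| := abs_neg _
        rw [habs]
        calc |F t| ≤ 2 * |1 - γ t| * |((n:ℝ) - 1) * γ t + 1| := hb1
          _ ≤ 2 * (((n:ℝ) - 1) * M + 1) * |1 - γ t| := by
              have hint := mul_le_mul_of_nonneg_left hP (abs_nonneg (1 - γ t))
              linarith
          _ = 2 * (((n:ℝ) - 1) * M + 1) * |(fun t => 1 - γ t) t| := rfl)
      (by simp [ht₁])
    simp [hγ0] at key
  -- invariance: (n-1) γ + 1 stays positive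
  have hlo : ∀ t, 0 ≤ t → 0 < ((n:ℝ) - 1) * γ t + 1 := by
    by_contra hc
    push_neg at hc
    obtain ⟨t₀, ht₀, h1⟩ := hc
    have hgc : ContinuousOn (fun t => ((n:ℝ) - 1) * γ t + 1) (Set.Icc 0 t₀) :=
      ((hcont.mono Set.Icc_subset_Ici_self).const_smul ((n:ℝ) - 1)).add continuousOn_const
    have h01 : (0:ℝ) ∈ Set.Icc (((n:ℝ) - 1) * γ t₀ + 1) (((n:ℝ) - 1) * γ 0 + 1) := by
      rw [hγ0]; constructor
      · exact h1
      · norm_num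
    obtain ⟨t₁, ht₁mem, ht₁⟩ := intermediate_value_Icc' ht₀ hgc h01
    have h0t₁ : (0:ℝ) ≤ t₁ := ht₁mem.1
    obtain ⟨M, hM⟩ := (isCompact_Icc : IsCompact (Set.Icc (0:ℝ) t₁)).exists_bound_of_continuousOn
      (hcont.mono Set.Icc_subset_Ici_self)
    have hM0 : 0 ≤ M := le_trans (norm_nonneg _) (hM 0 ⟨le_refl 0, h0t₁⟩)
    have key := gronwall_zero (v := fun t => ((n:ℝ) - 1) * γ t + 1)
      (v' := fun t => ((n:ℝ) - 1) * F t)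
      (K := 2 * ((n:ℝ) - 1) * (1 + M)) (a := 0) (b := t₁) h0t₁
      (fun t ht => (((hdyn' t ht.1).const_mul ((n:ℝ) - 1)).add_const 1))
      (fun t ht => by
        have hb1 := hFbound t ht.1
        have hMt : |γ t| ≤ M := by simpa [Real.norm_eq_abs] using hM t ht
        have h1γ : |1 - γ t| ≤ 1 + M := by
          calc |1 - γ t| ≤ |(1:ℝ)| + |γ t| := abs_sub _ _
            _ ≤ 1 + M := by rw [abs_one]; linarith
        have habs : |((n:ℝ) - 1) * F t| = ((n:ℝ) - 1) * |F t| := by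
          rw [abs_mul, abs_of_nonneg (by linarith : (0:ℝ) ≤ (n:ℝ) - 1)]
        rw [habs]
        calc ((n:ℝ) - 1) * |F t| ≤ ((n:ℝ) - 1) * (2 * |1 - γ t| * |((n:ℝ) - 1) * γ t + 1|) := by
              apply mul_le_mul_of_nonneg_left hb1 (by linarith)
          _ ≤ 2 * ((n:ℝ) - 1) * (1 + M) * |((n:ℝ) - 1) * γ t + 1| := by
              have hint := mul_le_mul_of_nonneg_left
                (mul_le_mul_of_nonneg_right h1γ (abs_nonneg (((n:ℝ) - 1) * γ t + 1)))
                (by linarith : (0:ℝ) ≤ (n:ℝ) - 1)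
              linarith
          _ = 2 * ((n:ℝ) - 1) * (1 + M) * |(fun t => ((n:ℝ) - 1) * γ t + 1) t| := rfl)
      (by simpa using ht₁)
    simp [hγ0] at key
  -- positivity of derivative
  have hFpos : ∀ t, 0 ≤ t → 0 < F t := by
    intro t ht
    rw [hFdef]
    apply div_pos
    · apply mul_pos
      apply mul_pos
      · positivity
      · linarith [hup t ht]
      · exact hlo t ht
    · exact mul_pos (hsqpos t ht) (hDpos t)
  -- monotonicity
  have hsm : StrictMonoOn γ (Set.Ici 0) := by
    apply strictMonoOn_of_deriv_pos (convex_Ici 0) hcont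
    intro t ht
    rw [interior_Ici] at ht
    rw [(hdyn' t ht.le).deriv]
    exact hFpos t ht.le
  have hmono : MonotoneOn γ (Set.Ici 0) := hsm.monotoneOn
  have hge0 : ∀ t, 0 ≤ t → 0 ≤ γ t := by
    intro t ht
    have := hmono Set.self_mem_Ici (Set.mem_Ici.2 ht) ht
    rwa [hγ0] at this
  -- the limit L
  have hne : (γ '' Set.Ici 0).Nonempty := ⟨γ 0, 0, Set.self_mem_Ici, rfl⟩
  have hbdd : BddAbove (γ '' Set.Ici 0) := by
    refine ⟨1, ?_⟩
    rintro x ⟨t, ht, rfl⟩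
    exact (hup t ht).le
  set L := sSup (γ '' Set.Ici 0) with hLdef
  have hγleL : ∀ t, 0 ≤ t → γ t ≤ L := fun t ht => le_csSup hbdd ⟨t, ht, rfl⟩
  have hL1 : L ≤ 1 := csSup_le hne (by rintro x ⟨t, ht, rfl⟩; exact (hup t ht).le)
  have hL0 : 0 ≤ L := by
    have := hγleL 0 le_rfl
    rwa [hγ0] at this
  have htendL : Tendsto γ atTop (nhds L) := by
    rw [Metric.tendsto_atTop]
    intro ε hε
    obtain ⟨x, ⟨s, hs, rfl⟩, hgs⟩ := exists_lt_of_lt_csSup hne (show L - ε < L by linarith)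
    refine ⟨s, fun t ht => ?_⟩
    have h0t : (0:ℝ) ≤ t := le_trans hs ht
    have h1 : γ s ≤ γ t := hmono (Set.mem_Ici.2 hs) (Set.mem_Ici.2 h0t) ht
    have h2 : γ t ≤ L := hγleL t h0t
    rw [Real.dist_eq, abs_lt]
    constructor <;> linarith
  -- L = 1
  have hLeq : L = 1 := by
    by_contra hne1
    have hLlt : L < 1 := lt_of_le_of_ne hL1 hne1
    set D := ((n:ℝ) - 1) * Real.exp (β * L) + Real.exp β with hD
    have hDpos' : 0 < D := add_pos (mul_pos (by linarith) (Real.exp_pos _)) (Real.exp_pos β)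
    set c := (1 - L) / D with hc
    have hcpos : 0 < c := div_pos (by linarith) hDpos'
    have hFlb : ∀ t, 0 ≤ t → 2 * c / Real.sqrt (t + 1) ≤ F t := by
      intro t ht
      rw [hFdef]
      have hγt0 := hge0 t ht
      have hγtL := hγleL t ht
      have hE1 : 1 ≤ Real.exp (β * γ t) := Real.one_le_exp (mul_nonneg hβ.le hγt0)
      have hEL : Real.exp (β * γ t) ≤ Real.exp (β * L) :=
        Real.exp_le_exp.2 (mul_le_mul_of_nonneg_left hγtL hβ.le)
      have hDt : ((n:ℝ) - 1) * Real.exp (β * γ t) + Real.exp β ≤ D := by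
        rw [hD]
        have := mul_le_mul_of_nonneg_left hEL (by linarith : (0:ℝ) ≤ (n:ℝ) - 1)
        linarith
      have p1 : (1:ℝ) ≤ ((n:ℝ) - 1) * γ t + 1 := by
        have := mul_nonneg (by linarith : (0:ℝ) ≤ (n:ℝ) - 1) hγt0
        linarith
      have hN : 2 * (1 - L) ≤
          2 * Real.exp (β * γ t) * (1 - γ t) * (((n:ℝ) - 1) * γ t + 1) := by
        have q1 : 2 * (1 - γ t) ≤ 2 * (1 - γ t) * (((n:ℝ) - 1) * γ t + 1) :=
          le_mul_of_one_le_right (by linarith) p1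
        have q2 : 2 * (1 - γ t) * (((n:ℝ) - 1) * γ t + 1) ≤
            2 * Real.exp (β * γ t) * (1 - γ t) * (((n:ℝ) - 1) * γ t + 1) := by
          apply mul_le_mul_of_nonneg_right _ (by linarith : (0:ℝ) ≤ ((n:ℝ) - 1) * γ t + 1)
          apply mul_le_mul_of_nonneg_right _ (by linarith : (0:ℝ) ≤ 1 - γ t)
          linarith [hE1]
        linarith
      have hSne : Real.sqrt (t + 1) ≠ 0 := ne_of_gt (hsqpos t ht)
      have hDne : D ≠ 0 := ne_of_gt hDpos'
      have heq : 2 * c / Real.sqrt (t + 1) = 2 * (1 - L) / (Real.sqrt (t + 1) * D) := by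
        rw [hc, ← mul_div_assoc, div_div, mul_comm D (Real.sqrt (t + 1))]
      rw [heq]
      apply div_le_div₀ (by nlinarith [Real.exp_pos (β * γ t)]) hN
        (mul_pos (hsqpos t ht) (hDpos t))
      exact mul_le_mul_of_nonneg_left hDt (hsqpos t ht).le
    have hcomp : ∀ t, 0 ≤ t → 4 * c * (Real.sqrt (t + 1) - 1) ≤ γ t := by
      have hmono2 : MonotoneOn (fun t => γ t - 4 * c * Real.sqrt (t + 1)) (Set.Ici 0) := by
        apply mono_aux (f' := fun t => F t - 4 * c * (1 / (2 * Real.sqrt (t + 1))))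
        · intro t ht
          have h1 : HasDerivAt (fun t : ℝ => t + 1) 1 t := (hasDerivAt_id t).add_const 1
          have h2 := (Real.hasDerivAt_sqrt (show t + 1 ≠ 0 by
            have : (0:ℝ) < t + 1 := by simp at ht; linarith
            linarith)).comp t h1
          have h3 : HasDerivAt (fun t : ℝ => Real.sqrt (t + 1)) (1 / (2 * Real.sqrt (t + 1))) t := by
            exact (by simpa using h2 : HasDerivAt (Real.sqrt ∘ fun t : ℝ => t + 1) (1 / (2 * Real.sqrt (t + 1))) t)
          exact (hdyn' t ht).sub (h3.const_mul (4 * c))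
        · intro t ht
          simp only [Set.mem_Ici] at ht
          have hlb := hFlb t ht
          have hsq := hsqpos t ht
          have heq2 : 4 * c * (1 / (2 * Real.sqrt (t + 1))) = 2 * c / Real.sqrt (t + 1) := by
            field_simp
            ring
          rw [heq2]
          linarith
      intro t ht
      have h := hmono2 Set.self_mem_Ici (Set.mem_Ici.2 ht) ht
      have h0 : Real.sqrt (0 + 1) = 1 := by norm_num
      have h' : γ 0 - 4 * c * Real.sqrt (0 + 1) ≤ γ t - 4 * c * Real.sqrt (t + 1) := h
      rw [hγ0, h0] at h'
      linarith
    set T := (1 + 1 / (4 * c)) ^ 2 with hT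
    have hT0 : 0 ≤ T := sq_nonneg _
    have h1 : Real.sqrt T = 1 + 1 / (4 * c) := Real.sqrt_sq (by positivity)
    have h2 : Real.sqrt T ≤ Real.sqrt (T + 1) := Real.sqrt_le_sqrt (by linarith)
    have h3 := hcomp T hT0
    have h4 := hup T hT0
    have h5 : 4 * c * (Real.sqrt T - 1) = 1 := by
      rw [h1]
      field_simp
      ring
    nlinarith [hcpos, h2, h3, h4]
  have htend1 : Tendsto γ atTop (nhds 1) := hLeq ▸ htendL
  -- part 4: log asymptotics
  have h1γpos : ∀ t, 0 ≤ t → 0 < 1 - γ t := fun t ht => by linarith [hup t ht]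
  set G : ℝ → ℝ := fun t => F t / (1 - γ t) with hG
  have hud : ∀ t, 0 ≤ t → HasDerivAt (fun t => Real.log (1 - γ t)) (-(G t)) t := by
    intro t ht
    have h1 := ((hdyn' t ht).const_sub 1).log (ne_of_gt (h1γpos t ht))
    have h3 : -(F t) / (1 - γ t) = -(G t) := neg_div _ _
    exact h3 ▸ h1
  set φ : ℝ → ℝ := fun y =>
    2 * Real.exp (β * y) * (((n:ℝ) - 1) * y + 1) / (((n:ℝ) - 1) * Real.exp (β * y) + Real.exp β)
    with hφ
  have hφden : ((n:ℝ) - 1) * Real.exp (β * 1) + Real.exp β ≠ 0 :=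
    ne_of_gt (add_pos (mul_pos (by linarith) (Real.exp_pos _)) (Real.exp_pos β))
  have hφc : ContinuousAt φ 1 := by
    apply ContinuousAt.div
    · fun_prop
    · fun_prop
    · exact hφden
  have hφ1 : φ 1 = 2 := by
    rw [hφ]
    simp only [mul_one]
    rw [mul_one] at hφden
    field_simp
  have htend2 : Tendsto (fun t => Real.sqrt (t + 1) * G t) atTop (nhds 2) := by
    have hcomp1 : Tendsto (fun t => φ (γ t)) atTop (nhds 2) := by
      have := hφc.tendsto.comp htend1
      rwa [hφ1] at this
    apply hcomp1.congr'
    filter_upwards [eventually_ge_atTop (0:ℝ)] with t ht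
    rw [hG, hφ, hFdef]
    have hsq : Real.sqrt (t + 1) ≠ 0 := ne_of_gt (hsqpos t ht)
    have h1γ : 1 - γ t ≠ 0 := ne_of_gt (h1γpos t ht)
    have hden := ne_of_gt (hDpos t)
    field_simp
  -- final limit
  refine ⟨hmono, fun t ht => ⟨hge0 t ht, hup t ht⟩, htend1, ?_⟩
  rw [Metric.tendsto_atTop]
  intro δ hδ
  set ε := min (δ / 8) 1 with hε
  have hε0 : 0 < ε := lt_min (by linarith) one_pos
  have hεδ : ε ≤ δ / 8 := min_le_left _ _
  obtain ⟨T₀, hT₀⟩ := Metric.tendsto_atTop.1 htend2 ε hε0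
  set T := max T₀ 1 with hTdef
  have hT1 : (1:ℝ) ≤ T := le_max_right _ _
  have hT0' : (0:ℝ) ≤ T := by linarith
  have hband : ∀ t, T ≤ t → 2 - ε ≤ Real.sqrt (t + 1) * G t ∧ Real.sqrt (t + 1) * G t ≤ 2 + ε := by
    intro t ht
    have := hT₀ t (le_trans (le_max_left _ _) ht)
    rw [Real.dist_eq, abs_lt] at this
    constructor <;> linarith [this.1, this.2]
  have hsqd : ∀ t, T ≤ t →
      HasDerivAt (fun t : ℝ => Real.sqrt (t + 1)) (1 / (2 * Real.sqrt (t + 1))) t := by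
    intro t ht
    have h1 : HasDerivAt (fun t : ℝ => t + 1) 1 t := (hasDerivAt_id t).add_const 1
    have h2 := (Real.hasDerivAt_sqrt (show t + 1 ≠ 0 by nlinarith)).comp t h1
    exact (by simpa using h2 : HasDerivAt (Real.sqrt ∘ fun t : ℝ => t + 1) (1 / (2 * Real.sqrt (t + 1))) t)
  have hdiveq : ∀ t, T ≤ t →
      2 * (2 + ε) * (1 / (2 * Real.sqrt (t + 1))) = (2 + ε) / Real.sqrt (t + 1) ∧
      2 * (2 - ε) * (1 / (2 * Real.sqrt (t + 1))) = (2 - ε) / Real.sqrt (t + 1) := by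
    intro t ht
    have hsq : Real.sqrt (t + 1) ≠ 0 := ne_of_gt (hsqpos t (by linarith))
    constructor <;> field_simp
  -- lower bound for u
  have hlowmono : MonotoneOn
      (fun t => Real.log (1 - γ t) + 2 * (2 + ε) * Real.sqrt (t + 1)) (Set.Ici T) := by
    apply mono_aux
      (f' := fun t => -(G t) + 2 * (2 + ε) * (1 / (2 * Real.sqrt (t + 1))))
    · intro t ht
      simp only [Set.mem_Ici] at ht
      exact (hud t (by linarith)).add ((hsqd t ht).const_mul (2 * (2 + ε)))
    · intro t ht
      simp only [Set.mem_Ici] at ht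
      have hb := (hband t ht).2
      have hsq := hsqpos t (by linarith : (0:ℝ) ≤ t)
      rw [(hdiveq t ht).1]
      have hGle : G t ≤ (2 + ε) / Real.sqrt (t + 1) := by
        rw [le_div_iff₀ hsq]
        nlinarith [hb]
      linarith
  have hhighanti : AntitoneOn
      (fun t => Real.log (1 - γ t) + 2 * (2 - ε) * Real.sqrt (t + 1)) (Set.Ici T) := by
    apply anti_aux
      (f' := fun t => -(G t) + 2 * (2 - ε) * (1 / (2 * Real.sqrt (t + 1))))
    · intro t ht
      simp only [Set.mem_Ici] at ht
      exact (hud t (by linarith)).add ((hsqd t ht).const_mul (2 * (2 - ε)))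
    · intro t ht
      simp only [Set.mem_Ici] at ht
      have hb := (hband t ht).1
      have hsq := hsqpos t (by linarith : (0:ℝ) ≤ t)
      rw [(hdiveq t ht).2]
      have hGge : (2 - ε) / Real.sqrt (t + 1) ≤ G t := by
        rw [div_le_iff₀ hsq]
        nlinarith [hb]
      linarith
  set C₁ := Real.log (1 - γ T) + 2 * (2 + ε) * Real.sqrt (T + 1) with hC₁
  set C₂ := Real.log (1 - γ T) + 2 * (2 - ε) * Real.sqrt (T + 1) with hC₂
  have hlow := aux_lim C₁ (2 * (2 + ε))
  have hhigh := aux_lim C₂ (2 * (2 - ε))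
  have h₁ : ∀ᶠ t in atTop, -(2 * (2 + ε)) - ε < (C₁ - 2 * (2 + ε) * Real.sqrt (t + 1)) / Real.sqrt t :=
    hlow.eventually (eventually_gt_nhds (by linarith))
  have h₂ : ∀ᶠ t in atTop, (C₂ - 2 * (2 - ε) * Real.sqrt (t + 1)) / Real.sqrt t < -(2 * (2 - ε)) + ε :=
    hhigh.eventually (eventually_lt_nhds (by linarith))
  obtain ⟨N, hN⟩ := eventually_atTop.1 ((h₁.and h₂).and (eventually_ge_atTop T))
  refine ⟨N, fun t ht => ?_⟩
  obtain ⟨⟨hb1, hb2⟩, hTt⟩ := hN t ht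
  have h0t : (0:ℝ) ≤ t := le_trans hT0' hTt
  have hsqt : 0 < Real.sqrt t := Real.sqrt_pos.2 (by linarith [hT1, hTt])
  have hul : C₁ - 2 * (2 + ε) * Real.sqrt (t + 1) ≤ Real.log (1 - γ t) := by
    have h5 : Real.log (1 - γ T) + 2 * (2 + ε) * Real.sqrt (T + 1) ≤
        Real.log (1 - γ t) + 2 * (2 + ε) * Real.sqrt (t + 1) :=
      hlowmono Set.self_mem_Ici (Set.mem_Ici.2 hTt) hTt
    rw [hC₁]
    linarith
  have huh : Real.log (1 - γ t) ≤ C₂ - 2 * (2 - ε) * Real.sqrt (t + 1) := by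
    have h5 : Real.log (1 - γ t) + 2 * (2 - ε) * Real.sqrt (t + 1) ≤
        Real.log (1 - γ T) + 2 * (2 - ε) * Real.sqrt (T + 1) :=
      hhighanti Set.self_mem_Ici (Set.mem_Ici.2 hTt) hTt
    rw [hC₂]
    linarith
  have hul' : (C₁ - 2 * (2 + ε) * Real.sqrt (t + 1)) / Real.sqrt t ≤
      Real.log (1 - γ t) / Real.sqrt t := by
    exact (div_le_div_iff_of_pos_right hsqt).2 hul
  have huh' : Real.log (1 - γ t) / Real.sqrt t ≤
      (C₂ - 2 * (2 - ε) * Real.sqrt (t + 1)) / Real.sqrt t :=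
    (div_le_div_iff_of_pos_right hsqt).2 huh
  rw [Real.dist_eq, abs_lt]
  constructor
  · have : -(2 * (2 + ε)) - ε < Real.log (1 - γ t) / Real.sqrt t := lt_of_lt_of_le hb1 hul'
    have hε1 : ε ≤ 1 := min_le_right _ _
    nlinarith [hεδ, hδ]
  · have : Real.log (1 - γ t) / Real.sqrt t < -(2 * (2 - ε)) + ε := lt_of_le_of_lt huh' hb2
    nlinarith [hεδ, hδ]
end
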